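/- arXiv:2010.15404 — 6 statements merged into one kernel-verified Lean document; each statement's English description precedes it below -/
import Mathlib

section
/- If m ≥ 3, then the task quality function q is non-decreasing: for all finite sets S ⊆ T ⊆ {1,…,m}, q(S) ≤ q(T). -/
/-- Temporal distance between slots `j` and `e`. -/
def tdist (j e : ℕ) : ℕ := ((j : ℤ) - (e : ℤ)).natAbs

/-- Padded `k`-NN distance sum `I_k^S(j)`. -/
def Ik (m k : ℕ) (S : Finset ℕ) (j : ℕ) : ℕ :=
  if k ≤ S.card then
    (((S.val.map (fun e => tdist j e)).sort (· ≤ ·)).take k).sum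
  else
    (S.val.map (fun e => tdist j e)).sum + (k - S.card) * m

/-- Interpolation error ratio `ρ^S(j)`. -/
noncomputable def rho (m k : ℕ) (S : Finset ℕ) (j : ℕ) : ℝ :=
  if j ∈ S then 0 else (Ik m k S j : ℝ) / ((k : ℝ) * (m : ℝ))

/-- Subtask finishing probability `p^S(j)`. -/
noncomputable def prob (m k : ℕ) (S : Finset ℕ) (j : ℕ) : ℝ :=
  (1 / (m : ℝ)) * (1 - rho m k S j)

/-- Task quality `q(S)` (note `Real.logb 2 0 = 0`, so the convention
`0 · log₂ 0 = 0` holds definitionally). -/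
noncomputable def quality (m k : ℕ) (S : Finset ℕ) : ℝ :=
  ∑ j ∈ Finset.Icc 1 m, -(prob m k S j * Real.logb 2 (prob m k S j))

open List in
lemma sort_cons_eq (a : ℕ) (s : Multiset ℕ) :
    (a ::ₘ s).sort (· ≤ ·) = (s.sort (· ≤ ·)).orderedInsert (· ≤ ·) a := by
  have h1 : ((a ::ₘ s).sort (· ≤ ·) : Multiset ℕ) = ((a :: s.sort (· ≤ ·) : List ℕ) : Multiset ℕ) := by
    rw [Multiset.sort_eq, ← Multiset.cons_coe, Multiset.sort_eq]
  have h2 : (a ::ₘ s).sort (· ≤ ·) ~ a :: s.sort (· ≤ ·) := Multiset.coe_eq_coe.mp h1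
  exact List.Perm.eq_of_pairwise'
    (Multiset.pairwise_sort _ _) ((Multiset.pairwise_sort s _).orderedInsert a _)
    (h2.trans (List.perm_orderedInsert _ a _).symm)

lemma take_sum_cons_le : ∀ (k : ℕ) (l : List ℕ) (a : ℕ), (∀ x ∈ l, a ≤ x) →
    l.Pairwise (· ≤ ·) → k ≤ l.length → ((a :: l).take k).sum ≤ (l.take k).sum
  | 0, _, _, _, _, _ => by simp
  | (k+1), [], _, _, _, hlen => by simp at hlen
  | (k+1), (b :: t), a, h, hs, hlen => by
    rw [List.take_succ_cons, List.take_succ_cons, List.sum_cons, List.sum_cons]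
    have hst := List.pairwise_cons.mp hs
    have IH := take_sum_cons_le k t b hst.1 hst.2 (by simpa using hlen)
    have hab : a ≤ b := h b List.mem_cons_self
    omega

lemma take_sum_orderedInsert_le : ∀ (l : List ℕ) (a k : ℕ), l.Pairwise (· ≤ ·) →
    k ≤ l.length → ((l.orderedInsert (· ≤ ·) a).take k).sum ≤ (l.take k).sum
  | [], _, k, _, hk => by
    have : k = 0 := by simpa using hk
    subst this; simp
  | (b :: t), a, k, hs, hk => by
    by_cases hab : a ≤ b
    · rw [List.orderedInsert_cons_of_le _ _ hab]
      refine take_sum_cons_le k (b :: t) a ?_ hs hk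
      intro x hx
      rcases List.mem_cons.mp hx with rfl | hx
      · exact hab
      · exact le_trans hab ((List.pairwise_cons.mp hs).1 x hx)
    · simp only [List.orderedInsert, if_neg hab]
      cases k with
        | zero => simp
        | succ n =>
          rw [List.take_succ_cons, List.take_succ_cons, List.sum_cons, List.sum_cons]
          have IH := take_sum_orderedInsert_le t a n (List.pairwise_cons.mp hs).2
            (by simpa using hk)
          omega

/-- Sum of the `k` smallest elements, padded with `m`. -/
def gfun (m k : ℕ) (M : Multiset ℕ) : ℕ :=
  if k ≤ Multiset.card M then ((M.sort (· ≤ ·)).take k).sum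
  else M.sum + (k - Multiset.card M) * m

lemma sort_sum (M : Multiset ℕ) : (M.sort (· ≤ ·)).sum = M.sum := by
  rw [← Multiset.sum_coe, Multiset.sort_eq]

lemma gfun_cons_le (m k a : ℕ) (M : Multiset ℕ) (ha : a ≤ m) :
    gfun m k (a ::ₘ M) ≤ gfun m k M := by
  unfold gfun
  rcases le_or_gt k (Multiset.card M) with h | h
  · rw [if_pos (by simp; omega), if_pos h, sort_cons_eq]
    exact take_sum_orderedInsert_le _ a k (Multiset.pairwise_sort M _)
      (by simpa using h)
  · rcases le_or_gt k (Multiset.card (a ::ₘ M)) with h2 | h2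
    · have hk : k = Multiset.card M + 1 := by simp at h2; omega
      rw [if_pos h2, if_neg (not_le.mpr h)]
      have hlen : ((a ::ₘ M).sort (· ≤ ·)).length = k := by simp [hk]
      rw [List.take_of_length_le (le_of_eq hlen), sort_sum, Multiset.sum_cons]
      have : k - Multiset.card M = 1 := by omega
      rw [this]
      omega
    · rw [if_neg (not_le.mpr h2), if_neg (not_le.mpr h), Multiset.sum_cons]
      obtain ⟨c, hc⟩ : ∃ c, k - Multiset.card M = c + 1 := ⟨k - Multiset.card M - 1, by omega⟩
      have hc2 : k - Multiset.card (a ::ₘ M) = c := by simp at h2 ⊢; omega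
      rw [hc, hc2, Nat.succ_mul]
      omega

lemma gfun_le (m k : ℕ) (M N : Multiset ℕ) (h : N ≤ M) (hM : ∀ x ∈ M, x ≤ m) :
    gfun m k M ≤ gfun m k N := by
  obtain ⟨u, rfl⟩ := Multiset.le_iff_exists_add.mp h
  clear h
  induction u using Multiset.induction with
  | empty => simp
  | cons a u ih =>
    rw [Multiset.add_cons] at hM ⊢
    exact le_trans (gfun_cons_le m k a (N + u) (hM a (Multiset.mem_cons_self a _)))
      (ih (fun x hx => hM x (Multiset.mem_cons_of_mem hx)))

lemma gfun_le_km (m k : ℕ) (M : Multiset ℕ) (hM : ∀ x ∈ M, x ≤ m) :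
    gfun m k M ≤ k * m := by
  unfold gfun
  split_ifs with h
  · calc (((M.sort (· ≤ ·)).take k).sum)
        ≤ ((M.sort (· ≤ ·)).take k).length * m := by
          refine List.sum_le_card_nsmul _ m ?_
          intro x hx
          exact hM x ((Multiset.mem_sort _).mp (List.mem_of_mem_take hx))
      _ ≤ k * m := by
          have := List.length_take_le k (M.sort (· ≤ ·))
          exact Nat.mul_le_mul_right m this
  · have h1 : M.sum ≤ Multiset.card M * m := Multiset.sum_le_card_nsmul M m hM
    have h2 : Multiset.card M * m + (k - Multiset.card M) * m = k * m := by
      rw [← Nat.add_mul]; congr 1; omega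
    omega

lemma Ik_eq_gfun (m k : ℕ) (S : Finset ℕ) (j : ℕ) :
    Ik m k S j = gfun m k (S.val.map (fun e => tdist j e)) := by
  simp [Ik, gfun, Multiset.card_map]

lemma tdist_le {j e m : ℕ} (hj : j ≤ m) (he : e ≤ m) : tdist j e ≤ m := by
  unfold tdist; omega

lemma mem_map_le {m j : ℕ} {T : Finset ℕ} (hT : T ⊆ Finset.Icc 1 m) (hj : j ≤ m) :
    ∀ x ∈ T.val.map (fun e => tdist j e), x ≤ m := by
  intro x hx
  obtain ⟨e, he, rfl⟩ := Multiset.mem_map.mp hx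
  have := Finset.mem_Icc.mp (hT he)
  exact tdist_le hj this.2

lemma Ik_anti (m k : ℕ) (S T : Finset ℕ) (j : ℕ) (hT : T ⊆ Finset.Icc 1 m)
    (hST : S ⊆ T) (hj : j ≤ m) : Ik m k T j ≤ Ik m k S j := by
  rw [Ik_eq_gfun, Ik_eq_gfun]
  exact gfun_le m k _ _ (Multiset.map_le_map (Finset.val_le_iff.mpr hST))
    (mem_map_le hT hj)

lemma Ik_le_km (m k : ℕ) (S : Finset ℕ) (j : ℕ) (hS : S ⊆ Finset.Icc 1 m)
    (hj : j ≤ m) : Ik m k S j ≤ k * m := by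
  rw [Ik_eq_gfun]
  exact gfun_le_km m k _ (mem_map_le hS hj)

lemma rho_nonneg (m k : ℕ) (S : Finset ℕ) (j : ℕ) : 0 ≤ rho m k S j := by
  unfold rho
  split_ifs
  · exact le_rfl
  · positivity

lemma rho_le_one (m k : ℕ) (hm : 1 ≤ m) (hk : 1 ≤ k) (S : Finset ℕ) (j : ℕ)
    (hS : S ⊆ Finset.Icc 1 m) (hj : j ≤ m) : rho m k S j ≤ 1 := by
  unfold rho
  have hkm : (0:ℝ) < (k:ℝ) * (m:ℝ) := by
    have h1 : (0:ℝ) < (k:ℝ) := by exact_mod_cast hk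
    have h2 : (0:ℝ) < (m:ℝ) := by exact_mod_cast hm
    positivity
  split_ifs
  · norm_num
  · rw [div_le_one hkm]
    calc ((Ik m k S j : ℕ) : ℝ) ≤ ((k * m : ℕ) : ℝ) :=
          Nat.cast_le.mpr (Ik_le_km m k S j hS hj)
      _ = (k:ℝ) * (m:ℝ) := by push_cast; ring

lemma rho_anti (m k : ℕ) (S T : Finset ℕ) (j : ℕ) (hT : T ⊆ Finset.Icc 1 m)
    (hST : S ⊆ T) (hj : j ≤ m) : rho m k T j ≤ rho m k S j := by
  unfold rho
  by_cases hjT : j ∈ T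
  · rw [if_pos hjT]
    split_ifs
    · exact le_rfl
    · positivity
  · have hjS : j ∉ S := fun h => hjT (hST h)
    rw [if_neg hjT, if_neg hjS]
    gcongr
    exact_mod_cast Ik_anti m k S T j hT hST hj

lemma negMulLog_mono {x y : ℝ} (hx : 0 ≤ x) (hxy : x ≤ y) (hy : y ≤ 1/3) :
    Real.negMulLog x ≤ Real.negMulLog y := by
  have hmono : MonotoneOn Real.negMulLog (Set.Icc 0 (1/3)) := by
    apply monotoneOn_of_deriv_nonneg (convex_Icc _ _)
    · exact Real.continuous_negMulLog.continuousOn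
    · intro z hz
      rw [interior_Icc] at hz
      exact (Real.differentiableAt_negMulLog (ne_of_gt hz.1)).differentiableWithinAt
    · intro z hz
      rw [interior_Icc] at hz
      rw [Real.deriv_negMulLog (ne_of_gt hz.1)]
      have h3 : Real.log z ≤ Real.log (1/3) := by
        gcongr
        · exact hz.1
        · exact le_of_lt hz.2
      have h4 : Real.log (1/3 : ℝ) ≤ -1 := by
        rw [show (1/3 : ℝ) = 3⁻¹ by norm_num, Real.log_inv]
        have : (1:ℝ) ≤ Real.log 3 := by
          rw [Real.le_log_iff_exp_le (by norm_num)]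
          calc Real.exp 1 ≤ 2.7182818286 := le_of_lt Real.exp_one_lt_d9
            _ ≤ 3 := by norm_num
        linarith
      linarith
  exact hmono ⟨hx, le_trans hxy hy⟩ ⟨le_trans hx hxy, hy⟩ hxy

/-- If `m ≥ 3`, the task quality is non-decreasing. -/
theorem quality_nondecreasing (m k : ℕ) (hm : 3 ≤ m) (hk : 1 ≤ k)
    (S T : Finset ℕ) (hT : T ⊆ Finset.Icc 1 m) (hST : S ⊆ T) :
    quality m k S ≤ quality m k T := by
  unfold quality
  refine Finset.sum_le_sum ?_
  intro j hj
  rw [Finset.mem_Icc] at hj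
  have hS : S ⊆ Finset.Icc 1 m := hST.trans hT
  have hm' : (0:ℝ) < (m:ℝ) := by
    have : (3:ℝ) ≤ (m:ℝ) := by exact_mod_cast hm
    linarith
  have hx0 : 0 ≤ prob m k S j := by
    unfold prob
    have := rho_le_one m k (by omega) hk S j hS hj.2
    have h1 : 0 ≤ 1 - rho m k S j := by linarith
    positivity
  have hxy : prob m k S j ≤ prob m k T j := by
    unfold prob
    have := rho_anti m k S T j hT hST hj.2
    have h1 : (0:ℝ) < 1 / (m:ℝ) := by positivity
    nlinarith
  have hy3 : prob m k T j ≤ 1/3 := by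
    unfold prob
    have h0 := rho_nonneg m k T j
    have h1 : (1 / (m:ℝ)) * (1 - rho m k T j) ≤ (1 / (m:ℝ)) * 1 := by
      apply mul_le_mul_of_nonneg_left (by linarith) (by positivity)
    have h2 : (1 / (m:ℝ)) ≤ 1/3 := by
      rw [div_le_div_iff₀ hm' (by norm_num)]
      have : (3:ℝ) ≤ (m:ℝ) := by exact_mod_cast hm
      linarith
    linarith
  have key : ∀ z : ℝ, -(z * Real.logb 2 z) = Real.negMulLog z / Real.log 2 := by
    intro z
    rw [Real.logb, Real.negMulLog]
    ring
  rw [key, key]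
  have hlog2 : (0:ℝ) < Real.log 2 := Real.log_pos (by norm_num)
  gcongr
  exact negMulLog_mono hx0 hxy hy3
end

section
/- For every slot j ∈ {1,…,m}, the set function S ↦ p^S(j) is non-decreasing: for all finite sets S ⊆ T ⊆ {1,…,m}, p^S(j) ≤ p^T(j); equivalently, the error ratio is non-increasing, i.e. ρ^T(j) ≤ ρ^S(j). -/
open List

lemma sum_take_le_of_sublist : ∀ {L M : List ℕ}, L <+ M → M.Pairwise (· ≤ ·) →
    ∀ k, k ≤ L.length → (M.take k).sum ≤ (L.take k).sum := by
  intro L M h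
  induction h with
  | slnil => intro _ k hk; simp at hk; simp [hk]
  | @cons L M a h ih =>
    intro hM k hk
    match k with
    | 0 => simp
    | k + 1 =>
      have hM' : M.Pairwise (· ≤ ·) := hM.of_cons
      have hkM : k < M.length := lt_of_lt_of_le hk (h.length_le)
      have h1 : ((a :: M).take (k+1)).sum = a + (M.take k).sum := by simp
      have h2 : (M.take (k+1)).sum = (M.take k).sum + M.get ⟨k, hkM⟩ :=
        List.sum_take_succ _ _ _
      have h3 : a ≤ M.get ⟨k, hkM⟩ :=
        (List.pairwise_cons.mp hM).1 _ (List.get_mem M ⟨k, hkM⟩)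
      have h4 := ih hM' (k+1) hk
      omega
  | @cons_cons L M a h ih =>
    intro hM k hk
    match k with
    | 0 => simp
    | k + 1 =>
      have e1 : ((a :: M).take (k+1)).sum = a + (M.take k).sum := by simp
      have e2 : ((a :: L).take (k+1)).sum = a + (L.take k).sum := by simp
      have := ih hM.of_cons k (by simpa using Nat.le_of_succ_le_succ hk)
      omega

lemma Ik_aux_cons (m k : ℕ) (x : ℕ) (hx : x ≤ m) (s : Multiset ℕ) :
    (((x ::ₘ s).sort (· ≤ ·)).take k).sum + (k - Multiset.card (x ::ₘ s)) * m
      ≤ ((s.sort (· ≤ ·)).take k).sum + (k - Multiset.card s) * m := by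
  set L := s.sort (· ≤ ·) with hL
  have hsortL : L.Pairwise (· ≤ ·) := Multiset.pairwise_sort _ _
  have hperm : (x ::ₘ s).sort (· ≤ ·) ~ L.orderedInsert (· ≤ ·) x := by
    have h1 : ((x ::ₘ s).sort (· ≤ ·) : Multiset ℕ) = ((x :: L : List ℕ) : Multiset ℕ) := by
      rw [Multiset.sort_eq, hL, ← Multiset.cons_coe, Multiset.sort_eq]
    have h2 : (x ::ₘ s).sort (· ≤ ·) ~ x :: L := Multiset.coe_eq_coe.mp h1
    exact h2.trans (List.perm_orderedInsert _ _ _).symm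
  have heq : (x ::ₘ s).sort (· ≤ ·) = L.orderedInsert (· ≤ ·) x :=
    hperm.eq_of_pairwise' (Multiset.pairwise_sort _ _)
      (hsortL.orderedInsert _ _)
  rw [heq]
  have hsub : L <+ L.orderedInsert (· ≤ ·) x := List.sublist_orderedInsert _ _
  have hlen : L.length = Multiset.card s := Multiset.length_sort _
  have hcc : Multiset.card (x ::ₘ s) = Multiset.card s + 1 := Multiset.card_cons _ _
  by_cases hks : k ≤ Multiset.card s
  · have := sum_take_le_of_sublist hsub (hsortL.orderedInsert _ _) k (by omega)
    have e1 : k - Multiset.card (x ::ₘ s) = 0 := by omega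
    have e2 : k - Multiset.card s = 0 := by omega
    rw [e1, e2]; simpa using this
  · push_neg at hks
    have hlen' : (L.orderedInsert (· ≤ ·) x).length = Multiset.card s + 1 := by
      rw [List.orderedInsert_length, hlen]
    have t1 : (L.orderedInsert (· ≤ ·) x).take k = L.orderedInsert (· ≤ ·) x :=
      List.take_of_length_le (by omega)
    have t2 : L.take k = L := List.take_of_length_le (by omega)
    rw [t1, t2, hcc]
    have s1 : (L.orderedInsert (· ≤ ·) x).sum = x + L.sum :=
      ((List.perm_orderedInsert _ x L).sum_eq).trans (by simp)
    rw [s1]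
    have hmul : (k - Multiset.card s) * m = (k - (Multiset.card s + 1)) * m + m := by
      rw [show k - Multiset.card s = (k - (Multiset.card s + 1)) + 1 by omega]; ring
    omega

lemma Ik_aux_mono (m k : ℕ) (s u : Multiset ℕ) (hu : ∀ x ∈ u, x ≤ m) :
    (((s + u).sort (· ≤ ·)).take k).sum + (k - Multiset.card (s + u)) * m
      ≤ ((s.sort (· ≤ ·)).take k).sum + (k - Multiset.card s) * m := by
  induction u using Multiset.induction_on with
  | empty => simp
  | cons a u ih =>
    rw [Multiset.add_cons]
    calc ((( a ::ₘ (s + u)).sort (· ≤ ·)).take k).sum + (k - Multiset.card (a ::ₘ (s + u))) * m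
        ≤ (((s + u).sort (· ≤ ·)).take k).sum + (k - Multiset.card (s + u)) * m :=
          Ik_aux_cons m k a (hu a (Multiset.mem_cons_self _ _)) (s + u)
      _ ≤ _ := ih (fun x hx => hu x (Multiset.mem_cons_of_mem hx))



lemma Ik_eq (m k : ℕ) (S : Finset ℕ) (j : ℕ) :
    Ik m k S j = (((S.val.map (fun e => tdist j e)).sort (· ≤ ·)).take k).sum
      + (k - S.card) * m := by
  unfold Ik
  split_ifs with h
  · rw [Nat.sub_eq_zero_of_le h, Nat.zero_mul, Nat.add_zero]
  · push_neg at h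
    have hlen : ((S.val.map (fun e => tdist j e)).sort (· ≤ ·)).length = S.card := by
      rw [Multiset.length_sort, Multiset.card_map]; rfl
    rw [List.take_of_length_le (by omega)]
    congr 1
    have := Multiset.sort_eq (S.val.map (fun e => tdist j e)) (· ≤ ·)
    calc (S.val.map (fun e => tdist j e)).sum
        = ((((S.val.map (fun e => tdist j e)).sort (· ≤ ·)) : List ℕ) : Multiset ℕ).sum := by rw [this]
      _ = _ := by rw [Multiset.sum_coe]


lemma Ik_mono (m k : ℕ) (j : ℕ) (S T : Finset ℕ) (hST : S ⊆ T)
    (hd : ∀ e ∈ T, tdist j e ≤ m) : Ik m k T j ≤ Ik m k S j := by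
  rw [Ik_eq, Ik_eq]
  have hle : S.val.map (fun e => tdist j e) ≤ T.val.map (fun e => tdist j e) :=
    Multiset.map_le_map (Finset.val_le_iff.mpr hST)
  obtain ⟨u, hu⟩ := Multiset.le_iff_exists_add.mp hle
  have hum : ∀ x ∈ u, x ≤ m := by
    intro x hx
    have hxT : x ∈ T.val.map (fun e => tdist j e) := by
      rw [hu]; exact Multiset.mem_add.mpr (Or.inr hx)
    obtain ⟨e, he, rfl⟩ := Multiset.mem_map.mp hxT
    exact hd e he
  have hcS : S.card = Multiset.card (S.val.map (fun e => tdist j e)) := by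
    rw [Multiset.card_map]; rfl
  have hcT : T.card = Multiset.card (S.val.map (fun e => tdist j e) + u) := by
    rw [← hu, Multiset.card_map]; rfl
  rw [hcS, hcT, hu]
  exact Ik_aux_mono m k _ u hum


/-- For every slot `j`, `S ↦ p^S(j)` is non-decreasing; equivalently
`S ↦ ρ^S(j)` is non-increasing. -/
theorem prob_nondecreasing (m k : ℕ) (hm : 2 ≤ m) (hk : 1 ≤ k)
    (j : ℕ) (hj : j ∈ Finset.Icc 1 m)
    (S T : Finset ℕ) (hT : T ⊆ Finset.Icc 1 m) (hST : S ⊆ T) :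
    prob m k S j ≤ prob m k T j ∧ rho m k T j ≤ rho m k S j := by
  have hkm : (0:ℝ) < (k : ℝ) * (m : ℝ) := by
    have : (1:ℝ) ≤ k := by exact_mod_cast hk
    have : (2:ℝ) ≤ m := by exact_mod_cast hm
    nlinarith
  have hrho : rho m k T j ≤ rho m k S j := by
    by_cases hjS : j ∈ S
    · have hjT : j ∈ T := hST hjS
      simp [rho, hjS, hjT]
    · by_cases hjT : j ∈ T
      · rw [rho, if_pos hjT, rho, if_neg hjS]
        positivity
      · rw [rho, if_neg hjT, rho, if_neg hjS]
        rw [div_le_div_iff_of_pos_right hkm]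
        have hd : ∀ e ∈ T, tdist j e ≤ m := by
          intro e he
          have h1 := Finset.mem_Icc.mp (hT he)
          have h2 := Finset.mem_Icc.mp hj
          unfold tdist
          omega
        exact_mod_cast Ik_mono m k j S T hST hd
  refine ⟨?_, hrho⟩
  unfold prob
  have hminv : (0:ℝ) ≤ 1 / (m : ℝ) := by positivity
  apply mul_le_mul_of_nonneg_left (by linarith) hminv
end

section
/- If m ≥ 3, then the summation quality q_sum is non-decreasing and submodular as a set function on finite subsets of {1,…,N} × {1,…,m}: for all S ⊆ T, q_sum(S) ≤ q_sum(T), and for all X, Y, q_sum(X ∩ Y) + q_sum(X ∪ Y) ≤ q_sum(X) + q_sum(Y). -/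
/-- The set of slots assigned within task `i`. -/
def taskSlice (S : Finset (ℕ × ℕ)) (i : ℕ) : Finset ℕ :=
  (S.filter (fun x => x.1 = i)).image Prod.snd

/-- The summation quality `q_sum`. -/
noncomputable def qsum (m k N : ℕ) (S : Finset (ℕ × ℕ)) : ℝ :=
  ∑ i ∈ Finset.Icc 1 N, quality m k (taskSlice S i)

/-- The minimum quality `q_min`. -/
noncomputable def qmin (m k N : ℕ) (hN : 1 ≤ N) (S : Finset (ℕ × ℕ)) : ℝ :=
  (Finset.Icc 1 N).inf' (Finset.nonempty_Icc.mpr hN)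
    (fun i => quality m k (taskSlice S i))

namespace QsumAux

/-- Number of elements of `S` within temporal distance `v` of `j`. -/
def cnt (S : Finset ℕ) (j v : ℕ) : ℕ := (S.filter (fun e => tdist j e ≤ v)).card

/-- The "counting" form of (a rescaling of) the finishing probability. -/
def G (m k : ℕ) (S : Finset ℕ) (j : ℕ) : ℕ :=
  if j ∈ S then k * m else ∑ v ∈ Finset.range m, min k (cnt S j v)

lemma list_sum_count (m : ℕ) : ∀ l : List ℕ, (∀ x ∈ l, x < m) →
    l.sum + ∑ v ∈ Finset.range m, l.countP (fun x => decide (x ≤ v)) = l.length * m := by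
  intro l
  induction l with
  | nil => simp
  | cons a l ih =>
    intro h
    have ha : a < m := h a (.head _)
    have hl := ih (fun x hx => h x (.tail _ hx))
    simp only [List.sum_cons, List.countP_cons, List.length_cons]
    rw [Finset.sum_add_distrib]
    have hstep : ∑ v ∈ Finset.range m, (if (fun x => decide (x ≤ v)) a then 1 else 0) = m - a := by
      simp only [decide_eq_true_eq]
      rw [Finset.sum_boole]
      have : (Finset.range m).filter (fun v => a ≤ v) = Finset.Ico a m := by
        ext v; simp [Finset.mem_filter, Finset.mem_range, Finset.mem_Ico]; omega
      rw [this, Nat.card_Ico]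
      simp
    rw [hstep]
    have h2 : (l.length + 1) * m = l.length * m + m := by ring
    omega

lemma countP_take_sorted (v : ℕ) : ∀ (l : List ℕ), l.Pairwise (· ≤ ·) → ∀ k,
    (l.take k).countP (fun x => decide (x ≤ v)) = min k (l.countP (fun x => decide (x ≤ v))) := by
  intro l
  induction l with
  | nil => intro _ k; simp
  | cons a l ih =>
    intro hs k
    have hs' : l.Pairwise (· ≤ ·) := hs.of_cons
    cases k with
    | zero => simp
    | succ k =>
      simp only [List.take_succ_cons, List.countP_cons]
      by_cases hav : a ≤ v
      · rw [ih hs' k]; simp [hav]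
      · have h0 : l.countP (fun x => decide (x ≤ v)) = 0 := by
          rw [List.countP_eq_zero]
          intro x hx
          have hax : a ≤ x := (List.pairwise_cons.mp hs).1 x hx
          simp; omega
        have h0' : (l.take k).countP (fun x => decide (x ≤ v)) = 0 := by
          have := List.Sublist.countP_le (p := fun x => decide (x ≤ v)) (List.take_sublist k l)
          omega
        simp [hav, h0, h0']

lemma cnt_eq (S : Finset ℕ) (j v : ℕ) :
    cnt S j v = ((S.val.map (fun e => tdist j e)).sort (· ≤ ·)).countP (fun x => decide (x ≤ v)) := by
  have h0 : (((S.val.map (fun e => tdist j e)).sort (· ≤ ·) : List ℕ) : Multiset ℕ)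
      = S.val.map (fun e => tdist j e) := Multiset.sort_eq _ _
  calc cnt S j v = S.val.countP (fun e => tdist j e ≤ v) := by
        rw [cnt, Finset.card, Finset.filter_val, Multiset.countP_eq_card_filter]
    _ = (S.val.map (fun e => tdist j e)).countP (fun x => x ≤ v) := by
        rw [Multiset.countP_map, Multiset.countP_eq_card_filter]
    _ = (((S.val.map (fun e => tdist j e)).sort (· ≤ ·) : List ℕ) : Multiset ℕ).countP
          (fun x => x ≤ v) := by rw [h0]
    _ = _ := Multiset.coe_countP _ _

/-- The key identity: the padded `k`-NN sum plus the layered count sum equals `k·m`. -/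
lemma Ik_add (m k : ℕ) (S : Finset ℕ) (j : ℕ) (hd : ∀ e ∈ S, tdist j e < m) :
    Ik m k S j + ∑ v ∈ Finset.range m, min k (cnt S j v) = k * m := by
  set M := S.val.map (fun e => tdist j e) with hM
  set l := M.sort (· ≤ ·) with hl
  have hcoe : (l : Multiset ℕ) = M := Multiset.sort_eq _ _
  have hlen : l.length = S.card := by
    rw [hl, Multiset.length_sort, hM, Multiset.card_map]; rfl
  have hmem : ∀ x ∈ l, x < m := by
    intro x hx
    have hxM : x ∈ M := by rw [← hcoe]; exact_mod_cast hx
    obtain ⟨e, he, rfl⟩ := Multiset.mem_map.mp hxM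
    exact hd e he
  have hsort : l.Pairwise (· ≤ ·) := Multiset.pairwise_sort _ _
  have hcnt : ∀ v, cnt S j v = l.countP (fun x => decide (x ≤ v)) := cnt_eq S j
  by_cases hks : k ≤ S.card
  · have hIk : Ik m k S j = (l.take k).sum := by rw [Ik, if_pos hks]
    have hmem' : ∀ x ∈ l.take k, x < m := fun x hx => hmem x (List.mem_of_mem_take hx)
    have hmain := list_sum_count m (l.take k) hmem'
    have hlen' : (l.take k).length = k := by rw [List.length_take]; omega
    have hterm : ∀ v ∈ Finset.range m,
        min k (cnt S j v) = (l.take k).countP (fun x => decide (x ≤ v)) := by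
      intro v _; rw [hcnt v, countP_take_sorted v l hsort k]
    rw [hIk, Finset.sum_congr rfl hterm, hmain, hlen']
  · have hIk : Ik m k S j = M.sum + (k - S.card) * m := by rw [Ik, if_neg hks]
    have hsum : M.sum = l.sum := by rw [← hcoe]; rfl
    have hmain := list_sum_count m l hmem
    rw [hlen] at hmain
    have hterm : ∀ v ∈ Finset.range m,
        min k (cnt S j v) = l.countP (fun x => decide (x ≤ v)) := by
      intro v _
      rw [hcnt v]
      have h1 : l.countP (fun x => decide (x ≤ v)) ≤ l.length := List.countP_le_length
      omega
    rw [hIk, Finset.sum_congr rfl hterm, hsum]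
    have harith : (k - S.card) * m + S.card * m = k * m := by
      rw [← Nat.add_mul]; congr 1; omega
    omega

lemma cnt_mono {S T : Finset ℕ} (h : S ⊆ T) (j v : ℕ) : cnt S j v ≤ cnt T j v :=
  Finset.card_le_card (Finset.filter_subset_filter _ h)

lemma cnt_add (X Y : Finset ℕ) (j v : ℕ) :
    cnt (X ∩ Y) j v + cnt (X ∪ Y) j v = cnt X j v + cnt Y j v := by
  rw [cnt, cnt, cnt, cnt, Finset.filter_inter_distrib, Finset.filter_union]
  exact Finset.card_inter_add_card_union _ _

lemma sum_min_le (m k : ℕ) (S : Finset ℕ) (j : ℕ) :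
    ∑ v ∈ Finset.range m, min k (cnt S j v) ≤ k * m := by
  calc ∑ v ∈ Finset.range m, min k (cnt S j v) ≤ ∑ _v ∈ Finset.range m, k :=
      Finset.sum_le_sum (fun v _ => min_le_left _ _)
    _ = k * m := by rw [Finset.sum_const, Finset.card_range, smul_eq_mul, mul_comm]

lemma G_le (m k : ℕ) (S : Finset ℕ) (j : ℕ) : G m k S j ≤ k * m := by
  rw [G]; split
  · exact le_refl _
  · exact sum_min_le m k S j

lemma G_mono (m k : ℕ) {S T : Finset ℕ} (h : S ⊆ T) (j : ℕ) : G m k S j ≤ G m k T j := by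
  by_cases hT : j ∈ T
  · calc G m k S j ≤ k * m := G_le m k S j
      _ = G m k T j := by rw [G, if_pos hT]
  · have hS : j ∉ S := fun hj => hT (h hj)
    rw [G, G, if_neg hS, if_neg hT]
    exact Finset.sum_le_sum fun v _ => min_le_min le_rfl (cnt_mono h j v)

lemma G_submod (m k : ℕ) (X Y : Finset ℕ) (j : ℕ) :
    G m k (X ∩ Y) j + G m k (X ∪ Y) j ≤ G m k X j + G m k Y j := by
  by_cases hX : j ∈ X <;> by_cases hY : j ∈ Y
  · rw [G, G, G, G, if_pos (Finset.mem_inter.mpr ⟨hX, hY⟩),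
      if_pos (Finset.mem_union.mpr (Or.inl hX)), if_pos hX, if_pos hY]
  · have h1 : j ∉ X ∩ Y := fun h => hY (Finset.mem_inter.mp h).2
    rw [G, G, G, G, if_neg h1, if_pos (Finset.mem_union.mpr (Or.inl hX)), if_pos hX, if_neg hY]
    have h2 : ∑ v ∈ Finset.range m, min k (cnt (X ∩ Y) j v) ≤
        ∑ v ∈ Finset.range m, min k (cnt Y j v) :=
      Finset.sum_le_sum fun v _ =>
        min_le_min le_rfl (cnt_mono (fun x hx => (Finset.mem_inter.mp hx).2) j v)
    omega
  · have h1 : j ∉ X ∩ Y := fun h => hX (Finset.mem_inter.mp h).1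
    rw [G, G, G, G, if_neg h1, if_pos (Finset.mem_union.mpr (Or.inr hY)), if_neg hX, if_pos hY]
    have h2 : ∑ v ∈ Finset.range m, min k (cnt (X ∩ Y) j v) ≤
        ∑ v ∈ Finset.range m, min k (cnt X j v) :=
      Finset.sum_le_sum fun v _ =>
        min_le_min le_rfl (cnt_mono (fun x hx => (Finset.mem_inter.mp hx).1) j v)
    omega
  · have h1 : j ∉ X ∩ Y := fun h => hX (Finset.mem_inter.mp h).1
    have h2 : j ∉ X ∪ Y := fun h => (Finset.mem_union.mp h).elim hX hY
    rw [G, G, G, G, if_neg h1, if_neg h2, if_neg hX, if_neg hY,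
      ← Finset.sum_add_distrib, ← Finset.sum_add_distrib]
    apply Finset.sum_le_sum
    intro v _
    have h3 := cnt_add X Y j v
    have h4 : cnt (X ∩ Y) j v ≤ cnt X j v :=
      cnt_mono (fun x hx => (Finset.mem_inter.mp hx).1) j v
    have h5 : cnt (X ∩ Y) j v ≤ cnt Y j v :=
      cnt_mono (fun x hx => (Finset.mem_inter.mp hx).2) j v
    omega

lemma tdist_lt_of_mem {m j e : ℕ} (hj : j ∈ Finset.Icc 1 m) (he : e ∈ Finset.Icc 1 m) :
    tdist j e < m := by
  rw [Finset.mem_Icc] at hj he; rw [tdist]; omega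

lemma prob_eq (m k : ℕ) (hm : 1 ≤ m) (hk : 1 ≤ k) {S : Finset ℕ} (hS : S ⊆ Finset.Icc 1 m)
    {j : ℕ} (hj : j ∈ Finset.Icc 1 m) :
    prob m k S j = (G m k S j : ℝ) / ((k : ℝ) * m * m) := by
  have hm0 : (0:ℝ) < (m:ℝ) := by exact_mod_cast Nat.lt_of_lt_of_le Nat.zero_lt_one hm
  have hk0 : (0:ℝ) < (k:ℝ) := by exact_mod_cast Nat.lt_of_lt_of_le Nat.zero_lt_one hk
  by_cases hjS : j ∈ S
  · rw [prob, rho, if_pos hjS, G, if_pos hjS]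
    push_cast
    field_simp
    norm_num
  · have hI := Ik_add m k S j (fun e he => tdist_lt_of_mem hj (hS he))
    have hcast : (Ik m k S j : ℝ) + ((∑ v ∈ Finset.range m, min k (cnt S j v) : ℕ) : ℝ)
        = (k : ℝ) * m := by exact_mod_cast congrArg (Nat.cast : ℕ → ℝ) hI
    rw [prob, rho, if_neg hjS, G, if_neg hjS]
    have hSig : ((∑ v ∈ Finset.range m, min k (cnt S j v) : ℕ) : ℝ)
        = (k:ℝ) * m - (Ik m k S j : ℝ) := by linarith [hcast]
    rw [hSig]
    field_simp

lemma prob_nonneg (m k : ℕ) (hm : 1 ≤ m) (hk : 1 ≤ k) {S : Finset ℕ}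
    (hS : S ⊆ Finset.Icc 1 m) {j : ℕ} (hj : j ∈ Finset.Icc 1 m) : 0 ≤ prob m k S j := by
  rw [prob_eq m k hm hk hS hj]
  have hm0 : (0:ℝ) < (m:ℝ) := by exact_mod_cast Nat.lt_of_lt_of_le Nat.zero_lt_one hm
  have hk0 : (0:ℝ) < (k:ℝ) := by exact_mod_cast Nat.lt_of_lt_of_le Nat.zero_lt_one hk
  positivity

lemma prob_le_third (m k : ℕ) (hm : 3 ≤ m) (hk : 1 ≤ k) {S : Finset ℕ}
    (hS : S ⊆ Finset.Icc 1 m) {j : ℕ} (hj : j ∈ Finset.Icc 1 m) :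
    prob m k S j ≤ 1 / 3 := by
  have hm1 : 1 ≤ m := le_trans (by norm_num) hm
  have hm0 : (0:ℝ) < (m:ℝ) := by exact_mod_cast Nat.lt_of_lt_of_le Nat.zero_lt_one hm1
  have hk0 : (0:ℝ) < (k:ℝ) := by exact_mod_cast Nat.lt_of_lt_of_le Nat.zero_lt_one hk
  have hGle : (G m k S j : ℝ) ≤ (k : ℝ) * m := by exact_mod_cast G_le m k S j
  have hm3 : (3:ℝ) ≤ (m:ℝ) := by exact_mod_cast hm
  rw [prob_eq m k hm1 hk hS hj]
  calc (G m k S j : ℝ) / ((k : ℝ) * m * m) ≤ ((k : ℝ) * m) / ((k : ℝ) * m * m) := by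
        gcongr
    _ = 1 / m := by field_simp
    _ ≤ 1 / 3 := by
        rw [div_le_div_iff₀ (by linarith) (by norm_num)]
        linarith

lemma prob_mono (m k : ℕ) (hm : 1 ≤ m) (hk : 1 ≤ k) {S T : Finset ℕ}
    (hT : T ⊆ Finset.Icc 1 m) (hST : S ⊆ T) {j : ℕ} (hj : j ∈ Finset.Icc 1 m) :
    prob m k S j ≤ prob m k T j := by
  have hm0 : (0:ℝ) < (m:ℝ) := by exact_mod_cast Nat.lt_of_lt_of_le Nat.zero_lt_one hm
  have hk0 : (0:ℝ) < (k:ℝ) := by exact_mod_cast Nat.lt_of_lt_of_le Nat.zero_lt_one hk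
  rw [prob_eq m k hm hk (hST.trans hT) hj, prob_eq m k hm hk hT hj]
  gcongr
  exact_mod_cast G_mono m k hST j

lemma prob_submod (m k : ℕ) (hm : 1 ≤ m) (hk : 1 ≤ k) {X Y : Finset ℕ}
    (hX : X ⊆ Finset.Icc 1 m) (hY : Y ⊆ Finset.Icc 1 m) {j : ℕ} (hj : j ∈ Finset.Icc 1 m) :
    prob m k (X ∩ Y) j + prob m k (X ∪ Y) j ≤ prob m k X j + prob m k Y j := by
  have hm0 : (0:ℝ) < (m:ℝ) := by exact_mod_cast Nat.lt_of_lt_of_le Nat.zero_lt_one hm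
  have hk0 : (0:ℝ) < (k:ℝ) := by exact_mod_cast Nat.lt_of_lt_of_le Nat.zero_lt_one hk
  have hI : X ∩ Y ⊆ Finset.Icc 1 m := (fun x hx => hX (Finset.mem_inter.mp hx).1)
  have hU : X ∪ Y ⊆ Finset.Icc 1 m := Finset.union_subset hX hY
  rw [prob_eq m k hm hk hI hj, prob_eq m k hm hk hU hj, prob_eq m k hm hk hX hj,
    prob_eq m k hm hk hY hj, ← add_div, ← add_div]
  have hGc : (G m k (X ∩ Y) j : ℝ) + (G m k (X ∪ Y) j : ℝ)
      ≤ (G m k X j : ℝ) + (G m k Y j : ℝ) := by exact_mod_cast G_submod m k X Y j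
  exact div_le_div_of_nonneg_right hGc (by positivity) |>.trans_eq rfl

lemma negMulLog_mono {a b : ℝ} (ha : 0 ≤ a) (hab : a ≤ b) (hb : b ≤ 1/3) :
    Real.negMulLog a ≤ Real.negMulLog b := by
  have hexp : (1:ℝ)/3 ≤ Real.exp (-1) := by
    rw [Real.exp_neg]
    rw [div_le_iff₀ (by norm_num), inv_mul_eq_div, le_div_iff₀ (Real.exp_pos 1)]
    nlinarith [Real.exp_one_lt_d9]
  have hmono : MonotoneOn Real.negMulLog (Set.Icc 0 (1/3)) := by
    apply monotoneOn_of_deriv_nonneg (convex_Icc 0 (1/3))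
      Real.continuous_negMulLog.continuousOn
    · rw [interior_Icc]
      intro x hx
      exact (Real.differentiableAt_negMulLog (ne_of_gt hx.1)).differentiableWithinAt
    · rw [interior_Icc]
      intro x hx
      rw [Real.deriv_negMulLog (ne_of_gt hx.1)]
      have hlog : Real.log x ≤ -1 := by
        rw [Real.log_le_iff_le_exp hx.1]
        linarith [hx.2]
      linarith
  exact hmono ⟨ha, hab.trans hb⟩ ⟨ha.trans hab, hb⟩ hab

lemma negMulLog_four {a b c d : ℝ} (ha : 0 ≤ a) (hab : a ≤ b) (hbc : b ≤ c) (hcd : c ≤ d)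
    (hsum : a + d = b + c) : Real.negMulLog a + Real.negMulLog d ≤
      Real.negMulLog b + Real.negMulLog c := by
  rcases eq_or_lt_of_le (hab.trans (hbc.trans hcd)) with heq | hlt
  · have h1 : a = b := by linarith
    have h2 : a = c := by linarith
    rw [← heq, ← h1, ← h2]
  · set t := (d - b)/(d - a) with ht
    have hda : 0 < d - a := by linarith
    have ht0 : 0 ≤ t := div_nonneg (by linarith) hda.le
    have ht1 : t ≤ 1 := by rw [ht, div_le_one hda]; linarith
    have hd0 : (0:ℝ) ≤ d := by linarith
    have h1 := (Real.concaveOn_negMulLog).2 (Set.mem_Ici.mpr ha) (Set.mem_Ici.mpr hd0)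
      ht0 (by linarith : 0 ≤ 1 - t) (by ring)
    have h2 := (Real.concaveOn_negMulLog).2 (Set.mem_Ici.mpr ha) (Set.mem_Ici.mpr hd0)
      (by linarith : 0 ≤ 1 - t) ht0 (by ring)
    simp only [smul_eq_mul] at h1 h2
    have hb' : t * a + (1 - t) * d = b := by rw [ht]; field_simp; ring
    have hc' : (1 - t) * a + t * d = c := by
      rw [ht]; field_simp; linear_combination (d - a) * hsum
    rw [hb'] at h1
    rw [hc'] at h2
    linarith

lemma quality_eq (m k : ℕ) (S : Finset ℕ) :
    quality m k S = ∑ j ∈ Finset.Icc 1 m, Real.negMulLog (prob m k S j) / Real.log 2 :=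
  Finset.sum_congr rfl fun j _ => by rw [Real.logb, Real.negMulLog]; ring

lemma quality_mono (m k : ℕ) (hm : 3 ≤ m) (hk : 1 ≤ k) {S T : Finset ℕ}
    (hT : T ⊆ Finset.Icc 1 m) (hST : S ⊆ T) : quality m k S ≤ quality m k T := by
  have hm1 : 1 ≤ m := by omega
  rw [quality_eq, quality_eq]
  apply Finset.sum_le_sum
  intro j hj
  have hlog : (0:ℝ) < Real.log 2 := Real.log_pos one_lt_two
  apply div_le_div_of_nonneg_right _ hlog.le
  exact negMulLog_mono (prob_nonneg m k hm1 hk (hST.trans hT) hj)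
    (prob_mono m k hm1 hk hT hST hj) (prob_le_third m k hm hk hT hj)

lemma quality_submod (m k : ℕ) (hm : 3 ≤ m) (hk : 1 ≤ k) {X Y : Finset ℕ}
    (hX : X ⊆ Finset.Icc 1 m) (hY : Y ⊆ Finset.Icc 1 m) :
    quality m k (X ∩ Y) + quality m k (X ∪ Y) ≤ quality m k X + quality m k Y := by
  have hm1 : 1 ≤ m := by omega
  rw [quality_eq, quality_eq, quality_eq, quality_eq,
    ← Finset.sum_add_distrib, ← Finset.sum_add_distrib]
  apply Finset.sum_le_sum
  intro j hj
  have hlog : (0:ℝ) < Real.log 2 := Real.log_pos one_lt_two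
  rw [← add_div, ← add_div]
  apply div_le_div_of_nonneg_right _ hlog.le
  have hI : X ∩ Y ⊆ Finset.Icc 1 m := fun x hx => hX (Finset.mem_inter.mp hx).1
  have hU : X ∪ Y ⊆ Finset.Icc 1 m := Finset.union_subset hX hY
  have ha0 : 0 ≤ prob m k (X ∩ Y) j := prob_nonneg m k hm1 hk hI hj
  have hsub := prob_submod m k hm1 hk hX hY hj
  have haX : prob m k (X ∩ Y) j ≤ prob m k X j :=
    prob_mono m k hm1 hk hX (fun x hx => (Finset.mem_inter.mp hx).1) hj
  have haY : prob m k (X ∩ Y) j ≤ prob m k Y j :=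
    prob_mono m k hm1 hk hY (fun x hx => (Finset.mem_inter.mp hx).2) hj
  have hXU : prob m k X j ≤ prob m k (X ∪ Y) j :=
    prob_mono m k hm1 hk hU (fun x hx => Finset.mem_union.mpr (Or.inl hx)) hj
  have hYU : prob m k Y j ≤ prob m k (X ∪ Y) j :=
    prob_mono m k hm1 hk hU (fun x hx => Finset.mem_union.mpr (Or.inr hx)) hj
  have hXt : prob m k X j ≤ 1/3 := prob_le_third m k hm hk hX hj
  have hYt : prob m k Y j ≤ 1/3 := prob_le_third m k hm hk hY hj
  rcases le_total (prob m k X j) (prob m k Y j) with hxy | hxy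
  · set a' := prob m k X j + prob m k Y j - prob m k (X ∪ Y) j with ha'
    have four := negMulLog_four (a := a') (b := prob m k X j) (c := prob m k Y j)
      (d := prob m k (X ∪ Y) j) (by rw [ha']; linarith) (by rw [ha']; linarith) hxy hYU
      (by rw [ha']; ring)
    have h1 : prob m k (X ∩ Y) j ≤ a' := by rw [ha']; linarith
    have h2 : a' ≤ 1/3 := by rw [ha']; linarith
    have mono := negMulLog_mono ha0 h1 h2
    linarith
  · set a' := prob m k X j + prob m k Y j - prob m k (X ∪ Y) j with ha'
    have four := negMulLog_four (a := a') (b := prob m k Y j) (c := prob m k X j)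
      (d := prob m k (X ∪ Y) j) (by rw [ha']; linarith) (by rw [ha']; linarith) hxy hXU
      (by rw [ha']; ring)
    have h1 : prob m k (X ∩ Y) j ≤ a' := by rw [ha']; linarith
    have h2 : a' ≤ 1/3 := by rw [ha']; linarith
    have mono := negMulLog_mono ha0 h1 h2
    linarith

lemma mem_taskSlice {S : Finset (ℕ × ℕ)} {i j : ℕ} : j ∈ taskSlice S i ↔ (i, j) ∈ S := by
  simp only [taskSlice, Finset.mem_image, Finset.mem_filter]
  constructor
  · rintro ⟨⟨x1, x2⟩, ⟨hx, h1⟩, h2⟩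
    simp only at h1 h2
    subst h1; subst h2; exact hx
  · intro h
    exact ⟨(i, j), ⟨h, rfl⟩, rfl⟩

lemma taskSlice_inter (X Y : Finset (ℕ × ℕ)) (i : ℕ) :
    taskSlice (X ∩ Y) i = taskSlice X i ∩ taskSlice Y i := by
  ext j; simp [mem_taskSlice, Finset.mem_inter]

lemma taskSlice_union (X Y : Finset (ℕ × ℕ)) (i : ℕ) :
    taskSlice (X ∪ Y) i = taskSlice X i ∪ taskSlice Y i := by
  ext j; simp [mem_taskSlice, Finset.mem_union]

lemma taskSlice_mono {S T : Finset (ℕ × ℕ)} (h : S ⊆ T) (i : ℕ) :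
    taskSlice S i ⊆ taskSlice T i :=
  fun j hj => mem_taskSlice.mpr (h (mem_taskSlice.mp hj))

lemma taskSlice_subset {m N : ℕ} {S : Finset (ℕ × ℕ)}
    (h : S ⊆ Finset.Icc 1 N ×ˢ Finset.Icc 1 m) (i : ℕ) :
    taskSlice S i ⊆ Finset.Icc 1 m := by
  intro j hj
  have := h (mem_taskSlice.mp hj)
  rw [Finset.mem_product] at this
  exact this.2

end QsumAux

/-- If `m ≥ 3`, the summation quality is non-decreasing and submodular. -/
theorem qsum_nondecreasing_submodular (m k N : ℕ) (hm : 3 ≤ m) (hk : 1 ≤ k)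
    (hN : 1 ≤ N) :
    (∀ S T : Finset (ℕ × ℕ), T ⊆ Finset.Icc 1 N ×ˢ Finset.Icc 1 m → S ⊆ T →
      qsum m k N S ≤ qsum m k N T) ∧
    (∀ X Y : Finset (ℕ × ℕ), X ⊆ Finset.Icc 1 N ×ˢ Finset.Icc 1 m →
      Y ⊆ Finset.Icc 1 N ×ˢ Finset.Icc 1 m →
      qsum m k N (X ∩ Y) + qsum m k N (X ∪ Y) ≤ qsum m k N X + qsum m k N Y) := by
  constructor
  · intro S T hT hST
    rw [qsum, qsum]
    apply Finset.sum_le_sum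
    intro i _
    exact QsumAux.quality_mono m k hm hk (QsumAux.taskSlice_subset hT i)
      (QsumAux.taskSlice_mono hST i)
  · intro X Y hX hY
    rw [qsum, qsum, qsum, qsum, ← Finset.sum_add_distrib, ← Finset.sum_add_distrib]
    apply Finset.sum_le_sum
    intro i _
    rw [QsumAux.taskSlice_inter, QsumAux.taskSlice_union]
    exact QsumAux.quality_submod m k hm hk (QsumAux.taskSlice_subset hX i)
      (QsumAux.taskSlice_subset hY i)
end

section
/- Let S ⊆ {1,…,m} be a finite set with |S| ≥ k, and let e and j be slots of {1,…,m} with e ∉ S and j ∉ S ∪ {e}. Let d_k denote the k-th smallest element of the multiset {|j − e'| : e' ∈ S}. Then executing e decreases the error ratio of j by exactly ρ^S(j) − ρ^{S ∪ {e}}(j) = max(0, d_k − |j − e|)/(k·m); in particular, the error ratio is unchanged if |j − e| ≥ d_k (e does not enter the k-NN set of j), and decreases by (d_k − |j − e|)/(k·m) if |j − e| < d_k (e replaces the k-th nearest executed subtask of j). -/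
lemma sum_take_succ (l : List ℕ) (n : ℕ) (h : n < l.length) :
    (l.take (n + 1)).sum = (l.take n).sum + l.getD n 0 := by
  rw [List.take_succ, List.sum_append, List.getD_eq_getElem l 0 h,
    List.getElem?_eq_getElem h]
  simp

lemma oi_sum_of_ge (l : List ℕ) (hl : List.Pairwise (· ≤ ·) l) (x k : ℕ)
    (hk : 1 ≤ k) (hlen : k ≤ l.length) (h : l.getD (k - 1) 0 ≤ x) :
    ((List.orderedInsert (· ≤ ·) x l).take k).sum = (l.take k).sum := by
  induction l generalizing k with
  | nil => simp at hlen; omega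
  | cons a t ih =>
    rw [List.pairwise_cons] at hl
    obtain ⟨ha, ht⟩ := hl
    obtain ⟨k', rfl⟩ : ∃ k', k = k' + 1 := ⟨k - 1, by omega⟩
    by_cases hxa : x ≤ a
    · -- x = (a::t).getD k' 0
      have hle : x ≤ (a :: t).getD k' 0 := by
        cases k' with
        | zero => simpa using hxa
        | succ k'' =>
          have hk'' : k'' < t.length := by simp at hlen; omega
          rw [List.getD_cons_succ, List.getD_eq_getElem t 0 hk'']
          exact le_trans hxa (ha _ (t.getElem_mem hk''))
      have hx : x = (a :: t).getD k' 0 := le_antisymm hle (by simpa using h)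
      rw [show List.orderedInsert (· ≤ ·) x (a :: t) = x :: a :: t by
        simp [List.orderedInsert, hxa]]
      rw [List.take_succ_cons, List.sum_cons,
        sum_take_succ (a :: t) k' (by simp at hlen ⊢; omega)]
      omega
    · rw [show List.orderedInsert (· ≤ ·) x (a :: t)
          = a :: List.orderedInsert (· ≤ ·) x t by simp [List.orderedInsert, hxa]]
      cases k' with
      | zero => simp
      | succ k'' =>
        rw [List.take_succ_cons, List.take_succ_cons, List.sum_cons, List.sum_cons,
          ih ht (k'' + 1) (by omega) (by simp at hlen; omega)
            (by simpa using h)]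

lemma oi_sum_of_lt (l : List ℕ) (hl : List.Pairwise (· ≤ ·) l) (x k : ℕ)
    (hk : 1 ≤ k) (hlen : k ≤ l.length) (h : x < l.getD (k - 1) 0) :
    ((List.orderedInsert (· ≤ ·) x l).take k).sum + l.getD (k - 1) 0
      = (l.take k).sum + x := by
  induction l generalizing k with
  | nil => simp at hlen; omega
  | cons a t ih =>
    rw [List.pairwise_cons] at hl
    obtain ⟨ha, ht⟩ := hl
    obtain ⟨k', rfl⟩ : ∃ k', k = k' + 1 := ⟨k - 1, by omega⟩
    by_cases hxa : x ≤ a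
    · rw [show List.orderedInsert (· ≤ ·) x (a :: t) = x :: a :: t by
        simp [List.orderedInsert, hxa]]
      rw [List.take_succ_cons, List.sum_cons,
        sum_take_succ (a :: t) k' (by simp at hlen ⊢; omega)]
      simp only [Nat.add_sub_cancel] at h ⊢
      omega
    · rw [show List.orderedInsert (· ≤ ·) x (a :: t)
          = a :: List.orderedInsert (· ≤ ·) x t by simp [List.orderedInsert, hxa]]
      cases k' with
      | zero => simp at h; omega
      | succ k'' =>
        rw [List.take_succ_cons, List.take_succ_cons, List.sum_cons, List.sum_cons]
        have := ih ht (k'' + 1) (by omega) (by simp at hlen; omega)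
          (by simpa using h)
        simp only [Nat.add_sub_cancel] at this ⊢
        rw [List.getD_cons_succ]
        omega

lemma sort_cons' (x : ℕ) (s : Multiset ℕ) :
    Multiset.sort (x ::ₘ s) (· ≤ ·)
      = List.orderedInsert (· ≤ ·) x (Multiset.sort s (· ≤ ·)) := by
  refine (fun h a b => List.Perm.eq_of_pairwise' (r := (· ≤ ·)) a b h) ?_ ?_ ?_
  · have h1 : (Multiset.sort (x ::ₘ s) (· ≤ ·) : Multiset ℕ)
        = ((x :: Multiset.sort s (· ≤ ·) : List ℕ) : Multiset ℕ) := by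
      simp [Multiset.sort_eq, ← Multiset.cons_coe]
    have h2 := Multiset.coe_eq_coe.mp h1
    exact h2.trans (List.perm_orderedInsert _ x _).symm
  · exact Multiset.pairwise_sort _ _
  · exact (Multiset.pairwise_sort s _).orderedInsert x _

/-- When `|S| ≥ k`, executing a new slot `e` decreases the error ratio of an
unexecuted slot `j` by exactly `max(0, d_k − |j − e|)/(k·m)`, where `d_k` is
the `k`-th smallest distance from `j` to the executed slots of `S`. -/
theorem rho_change_large (m k : ℕ) (hm : 2 ≤ m) (hk : 1 ≤ k)
    (S : Finset ℕ) (hS : S ⊆ Finset.Icc 1 m) (hcard : k ≤ S.card)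
    (e : ℕ) (he : e ∈ Finset.Icc 1 m) (heS : e ∉ S)
    (j : ℕ) (hj : j ∈ Finset.Icc 1 m) (hjS : j ∉ S ∪ {e})
    (d : ℕ)
    (hd : d = (((S.val.map (fun e' => tdist j e')).sort (· ≤ ·)).getD (k - 1) 0)) :
    rho m k S j - rho m k (S ∪ {e}) j =
      max 0 ((d : ℝ) - (tdist j e : ℝ)) / ((k : ℝ) * (m : ℝ)) ∧
    (d ≤ tdist j e → rho m k (S ∪ {e}) j = rho m k S j) ∧
    (tdist j e < d →
      rho m k S j - rho m k (S ∪ {e}) j =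
        ((d : ℝ) - (tdist j e : ℝ)) / ((k : ℝ) * (m : ℝ))) := by
  have hjS' : j ∉ S := fun h => hjS (Finset.mem_union_left _ h)
  set x := tdist j e with hx
  set L := (S.val.map (fun e' => tdist j e')).sort (· ≤ ·) with hL
  have hLlen : L.length = S.card := by simp [hL]
  have hLsorted : List.Pairwise (· ≤ ·) L := Multiset.pairwise_sort _ _
  have hunion : S ∪ {e} = insert e S := by
    ext a; simp [or_comm]
  have hcard' : k ≤ (S ∪ {e}).card := by
    rw [hunion, Finset.card_insert_of_notMem heS]; omega
  have hval : (S ∪ {e}).val.map (fun e' => tdist j e')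
      = x ::ₘ S.val.map (fun e' => tdist j e') := by
    rw [hunion, Finset.insert_val_of_notMem heS, Multiset.map_cons]
  have hIkS : Ik m k S j = (L.take k).sum := by
    rw [Ik, if_pos hcard]
  have hIkU : Ik m k (S ∪ {e}) j
      = ((List.orderedInsert (· ≤ ·) x L).take k).sum := by
    rw [Ik, if_pos hcard', hval, sort_cons']
  have hrhoS : rho m k S j = (Ik m k S j : ℝ) / ((k : ℝ) * m) := by
    rw [rho, if_neg hjS']
  have hrhoU : rho m k (S ∪ {e}) j = (Ik m k (S ∪ {e}) j : ℝ) / ((k : ℝ) * m) := by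
    rw [rho, if_neg hjS]
  have hkm : (0 : ℝ) < (k : ℝ) * m := by positivity
  have hlen' : k ≤ L.length := by omega
  by_cases hcase : d ≤ x
  · have heq : Ik m k (S ∪ {e}) j = Ik m k S j := by
      rw [hIkS, hIkU, oi_sum_of_ge L hLsorted x k hk hlen' (by rw [← hd]; exact hcase)]
    refine ⟨?_, fun _ => by rw [hrhoS, hrhoU, heq], fun h => absurd hcase (by omega)⟩
    rw [hrhoS, hrhoU, heq, sub_self]
    have hdx : (d:ℝ) ≤ x := by exact_mod_cast hcase
    rw [max_eq_left (by linarith)]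
    simp
  · push_neg at hcase
    have heq : Ik m k (S ∪ {e}) j + d = Ik m k S j + x := by
      rw [hIkS, hIkU, hd]
      exact oi_sum_of_lt L hLsorted x k hk hlen' (by rw [← hd]; exact hcase)
    have heqR : (Ik m k S j : ℝ) - (Ik m k (S ∪ {e}) j : ℝ) = (d : ℝ) - x := by
      have h2 : ((Ik m k (S ∪ {e}) j + d : ℕ) : ℝ) = ((Ik m k S j + x : ℕ) : ℝ) := by
        exact_mod_cast heq
      push_cast at h2
      linarith
    have hmain : rho m k S j - rho m k (S ∪ {e}) j = ((d : ℝ) - x) / ((k : ℝ) * m) := by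
      rw [hrhoS, hrhoU, div_sub_div_same, heqR]
    refine ⟨?_, fun h => absurd h (by omega), fun _ => hmain⟩
    rw [hmain, max_eq_right]
    have : (x : ℝ) < d := by exact_mod_cast hcase
    linarith
end

section
/- Lower bound on the error ratio after one tentative execution: let S ⊆ {1,…,m} be a finite set, and let e' and j be slots of {1,…,m} with e' ∉ S and j ∉ S ∪ {e'}. Then ρ^{S ∪ {e'}}(j) ≥ (I_{k−1}^S(j) + 1)/(k·m), i.e. executing any single additional slot can reduce the k-th nearest-neighbor distance of j to at most 1 while the (k−1) nearest executed subtasks of j in S contribute at least I_{k−1}^S(j). -/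
/-- Sum of the first `s.length` elements of a sorted list is at most the sum of
any sublist `s`. -/
lemma sum_take_le_of_sublist_sorted {s l : List ℕ} (h : List.Sublist s l)
    (hl : l.Pairwise (· ≤ ·)) : (l.take s.length).sum ≤ s.sum := by
  induction h with
  | slnil => simp
  | @cons l₁ l₂ a h ih =>
    rcases List.pairwise_cons.mp hl with ⟨ha, hl₂⟩
    cases' l₁ with b t
    · simp
    · have hlen : (b :: t).length ≤ l₂.length := h.length_le
      have hlt : (b :: t).length - 1 < l₂.length := by
        simp at hlen ⊢; omega
      have htake : (l₂.take ((b :: t).length)).sum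
          = (l₂.take ((b :: t).length - 1)).sum + l₂.get ⟨(b :: t).length - 1, hlt⟩ := by
        have := List.sum_take_succ l₂ ((b :: t).length - 1) hlt
        simpa [Nat.sub_add_cancel (by simp : 1 ≤ (b :: t).length)] using this
      have hale : a ≤ l₂.get ⟨(b :: t).length - 1, hlt⟩ := ha _ (l₂.get_mem ⟨(b :: t).length - 1, hlt⟩)
      have := ih hl₂
      calc (List.take (b :: t).length (a :: l₂)).sum
          = a + (l₂.take ((b :: t).length - 1)).sum := by
            simp [List.take_cons, List.length_cons]
        _ ≤ (l₂.take ((b :: t).length - 1)).sum + l₂.get ⟨(b :: t).length - 1, hlt⟩ := by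
            omega
        _ = (l₂.take ((b :: t).length)).sum := htake.symm
        _ ≤ (b :: t).sum := this
  | @cons_cons l₁ l₂ a h ih =>
    rcases List.pairwise_cons.mp hl with ⟨_, hl₂⟩
    simpa using Nat.add_le_add_left (ih hl₂) a

/-- Sum of the `N.card` smallest elements of `M` is at most `N.sum`, for `N ≤ M`. -/
lemma sum_take_sort_le {M N : Multiset ℕ} (h : N ≤ M) :
    ((M.sort (· ≤ ·)).take (Multiset.card N)).sum ≤ N.sum := by
  have hsub : List.Sublist (N.sort (· ≤ ·)) (M.sort (· ≤ ·)) := by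
    refine List.sublist_of_subperm_of_pairwise ?_ (Multiset.pairwise_sort _ _)
      (Multiset.pairwise_sort _ _)
    have h2 : (↑(N.sort (· ≤ ·)) : Multiset ℕ) ≤ ↑(M.sort (· ≤ ·)) := by
      rw [Multiset.sort_eq, Multiset.sort_eq]; exact h
    exact Multiset.coe_le.mp h2
  have := sum_take_le_of_sublist_sorted hsub (Multiset.pairwise_sort _ _)
  have hlen : (N.sort (· ≤ ·)).length = Multiset.card N := Multiset.length_sort _
  have hsum : (N.sort (· ≤ ·)).sum = N.sum := by
    rw [← Multiset.sum_coe, Multiset.sort_eq]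
  rw [hlen, hsum] at this
  exact this

lemma take_sort_le (M : Multiset ℕ) (n : ℕ) :
    (↑((M.sort (· ≤ ·)).take n) : Multiset ℕ) ≤ M := by
  have : ((M.sort (· ≤ ·)).take n : Multiset ℕ) ≤ ↑(M.sort (· ≤ ·)) :=
    Multiset.coe_le.mpr (List.take_sublist _ _).subperm
  rwa [Multiset.sort_eq] at this

/-- Key combinatorial inequality. -/
lemma key_ineq (M : Multiset ℕ) (d k : ℕ) (hd : 1 ≤ d)
    (hM : ∀ x ∈ M, 1 ≤ x) (hk : 1 ≤ k) (hkc : k ≤ Multiset.card M + 1) :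
    ((M.sort (· ≤ ·)).take (k - 1)).sum + 1 ≤ (((d ::ₘ M).sort (· ≤ ·)).take k).sum := by
  set M' : Multiset ℕ := d ::ₘ M with hM'
  have hM'card : Multiset.card M' = Multiset.card M + 1 := by simp [hM']
  have hM'mem : ∀ x ∈ M', 1 ≤ x := by
    intro x hx
    rcases Multiset.mem_cons.mp hx with rfl | hx
    · exact hd
    · exact hM x hx
  set N : Multiset ℕ := ↑((M'.sort (· ≤ ·)).take k) with hN
  have hNM' : N ≤ M' := take_sort_le M' k
  have hNcard : Multiset.card N = k := by
    simp [hN, Multiset.length_sort, hM'card]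
    omega
  set N₁ : Multiset ℕ := N.erase d with hN₁
  have hN₁M : N₁ ≤ M := Multiset.erase_le_iff_le_cons.mpr hNM'
  have hN₁card : k - 1 ≤ Multiset.card N₁ := by
    by_cases hmem : d ∈ N
    · rw [hN₁, Multiset.card_erase_of_mem hmem, hNcard, Nat.pred_eq_sub_one]
    · rw [hN₁, Multiset.erase_of_notMem hmem, hNcard]; omega
  set N₂ : Multiset ℕ := ↑((N₁.sort (· ≤ ·)).take (k - 1)) with hN₂
  have hN₂N₁ : N₂ ≤ N₁ := take_sort_le N₁ (k - 1)
  have hN₂card : Multiset.card N₂ = k - 1 := by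
    simp [hN₂, Multiset.length_sort]
    omega
  have hN₂M : N₂ ≤ M := le_trans hN₂N₁ hN₁M
  have hN₂N : N₂ ≤ N := le_trans hN₂N₁ (Multiset.erase_le d N)
  -- first part
  have h1 : ((M.sort (· ≤ ·)).take (k - 1)).sum ≤ N₂.sum := by
    have := sum_take_sort_le hN₂M
    rwa [hN₂card] at this
  -- N.sum = N₂.sum + (N - N₂).sum
  have hsplit : N₂ + (N - N₂) = N := add_tsub_cancel_of_le hN₂N
  have hdiffcard : Multiset.card (N - N₂) = 1 := by
    have := Multiset.card_sub hN₂N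
    rw [this, hNcard, hN₂card]; omega
  obtain ⟨x, hx⟩ := Multiset.card_eq_one.mp hdiffcard
  have hxN : x ∈ N := by
    have : x ∈ N - N₂ := by simp [hx]
    exact Multiset.mem_of_le (tsub_le_self) this
  have hx1 : 1 ≤ x := hM'mem x (Multiset.mem_of_le hNM' hxN)
  have hNsum : N.sum = N₂.sum + x := by
    rw [← hsplit, Multiset.sum_add, hx]
    simp
  have hNsum' : N.sum = ((M'.sort (· ≤ ·)).take k).sum := by
    simp [hN]
  omega



lemma one_le_tdist {j e : ℕ} (h : j ≠ e) : 1 ≤ tdist j e := by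
  unfold tdist; omega

lemma Ik_step (m k : ℕ) (hk : 1 ≤ k) (S : Finset ℕ) (e' : ℕ) (heS : e' ∉ S)
    (j : ℕ) (hje : j ≠ e') (hjS : ∀ e ∈ S, j ≠ e) :
    Ik m (k - 1) S j + 1 ≤ Ik m k (S ∪ {e'}) j := by
  have hunion : S ∪ {e'} = insert e' S := by
    rw [Finset.union_comm, ← Finset.insert_eq]
  have hval : (S ∪ {e'}).val = e' ::ₘ S.val := by
    rw [hunion, Finset.insert_val_of_notMem heS]
  have hcard : (S ∪ {e'}).card = S.card + 1 := by
    rw [hunion, Finset.card_insert_of_notMem heS]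
  set f : ℕ → ℕ := fun e => tdist j e with hf
  have hmap : ((S ∪ {e'}).val.map f) = f e' ::ₘ S.val.map f := by
    rw [hval, Multiset.map_cons]
  have hd1 : 1 ≤ f e' := one_le_tdist hje
  have hM : ∀ x ∈ S.val.map f, 1 ≤ x := by
    intro x hx
    obtain ⟨e, he, rfl⟩ := Multiset.mem_map.mp hx
    exact one_le_tdist (hjS e he)
  have hcardmap : Multiset.card (S.val.map f) = S.card := by
    rw [Multiset.card_map]; rfl
  unfold Ik
  by_cases hA : k ≤ S.card + 1
  · rw [if_pos (by omega : k - 1 ≤ S.card), if_pos (by rw [hcard]; exact hA)]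
    rw [hmap]
    exact key_ineq (S.val.map f) (f e') k hd1 hM hk (by rw [hcardmap]; omega)
  · rw [if_neg (by omega : ¬ (k - 1 ≤ S.card)), if_neg (by rw [hcard]; omega)]
    rw [hmap, Multiset.sum_cons, hcard]
    have : k - 1 - S.card = k - (S.card + 1) := by omega
    rw [this, ← hf]
    omega

/-- Lower bound on the error ratio after one tentative execution:
`ρ^{S ∪ {e'}}(j) ≥ (I_{k−1}^S(j) + 1)/(k·m)`. -/
theorem rho_lower_bound (m k : ℕ) (hm : 2 ≤ m) (hk : 1 ≤ k)
    (S : Finset ℕ) (hS : S ⊆ Finset.Icc 1 m)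
    (e' : ℕ) (he' : e' ∈ Finset.Icc 1 m) (heS : e' ∉ S)
    (j : ℕ) (hj : j ∈ Finset.Icc 1 m) (hjS : j ∉ S ∪ {e'}) :
    ((Ik m (k - 1) S j : ℝ) + 1) / ((k : ℝ) * (m : ℝ)) ≤
      rho m k (S ∪ {e'}) j := by
  rw [rho, if_neg hjS]
  have hkm : (0:ℝ) < (k : ℝ) * (m : ℝ) := by
    have : (0:ℝ) < (k:ℝ) := by exact_mod_cast hk
    have h2 : (0:ℝ) < (m:ℝ) := by positivity
    positivity
  have hje : j ≠ e' := by
    intro h; exact hjS (by simp [h])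
  have hjSmem : ∀ e ∈ S, j ≠ e := by
    intro e he h; exact hjS (by simp [h ▸ he])
  have key := Ik_step m k hk S e' heS j hje hjSmem
  gcongr
  exact_mod_cast key
end

section
/- Budgeted greedy approximation guarantee: let V be a finite set, let f be a real-valued non-decreasing submodular function on finite subsets of V with f(∅) = 0, let c : V → ℝ be a positive cost function, and let b ≥ 0 be a budget. Suppose v₁, …, v_T is a cost-benefit greedy sequence: the v_t are distinct, and for each t, writing G_{t−1} = {v₁, …, v_{t−1}}, we have c(G_{t−1}) + c(v_t) ≤ b and (f(G_{t−1} ∪ {v_t}) − f(G_{t−1}))/c(v_t) ≥ (f(G_{t−1} ∪ {u}) − f(G_{t−1}))/c(u) for every u ∉ G_{t−1} with c(G_{t−1}) + c(u) ≤ b; and suppose the sequence is maximal, i.e. there is no u ∉ G_T with c(G_T) + c(u) ≤ b. Then max( f(G_T), max{ f({v}) : v ∈ V, c(v) ≤ b } ) ≥ (1 − 1/√e) · max{ f(A) : A ⊆ V, c(A) ≤ b }, where c(A) := ∑_{v ∈ A} c(v). -/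
private lemma key_ineq_s17 {p : ℝ} (hp0 : 0 < p) (hp : p ≤ 1/2) :
    Real.exp (2 - 1/p) * (Real.exp (-p) - (1 - Real.exp (-(1/2 : ℝ)))) ≤
      1 - 2 * (1 - Real.exp (-(1/2 : ℝ))) := by
  set q : ℝ := 1/p - 2 with hq
  have h1p : 1/p = q + 2 := by rw [hq]; ring
  have hq0 : 0 ≤ q := by
    have h2 : (2:ℝ) ≤ 1/p := by rw [le_div_iff₀ hp0]; linarith
    rw [hq]; linarith
  have h2 : p * (q + 2) = 1 := by
    rw [← h1p]; field_simp
  have hpq : 1/2 + (3/4) * q ≤ p + q := by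
    have key : (p + q - (1/2 + 3/4*q)) * (q+2) = q^2/4 := by linear_combination h2
    nlinarith [key, show (0:ℝ) < q + 2 by linarith, sq_nonneg q]
  set A : ℝ := Real.exp (-(1/2 : ℝ)) with hA
  set E3 : ℝ := Real.exp (-(3/4 * q)) with hE3
  set E4 : ℝ := Real.exp (-q) with hE4
  have hA0 : 0 < A := Real.exp_pos _
  have hexp2 : Real.exp (2 - 1/p) = E4 := by rw [hE4]; congr 1; rw [h1p]; ring
  have F1 : E4 * Real.exp (-p) ≤ A * E3 := by
    rw [hE4, hA, hE3, ← Real.exp_add, ← Real.exp_add]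
    exact Real.exp_le_exp.mpr (by linarith)
  have F2 : (3/4) * (1 - E4) ≤ 1 - E3 := by
    set x : ℝ := Real.exp (-(q/4)) with hx
    have hx0 : 0 < x := Real.exp_pos _
    have hx1 : x ≤ 1 := by
      rw [hx, ← Real.exp_zero]
      exact Real.exp_le_exp.mpr (by linarith)
    have h3 : E3 = x^3 := by
      rw [hE3, hx, ← Real.exp_nat_mul]; congr 1; push_cast; ring
    have h4 : E4 = x^4 := by
      rw [hE4, hx, ← Real.exp_nat_mul]; congr 1; push_cast; ring
    rw [h3, h4]
    nlinarith [mul_nonneg (sq_nonneg (x-1)) (by nlinarith : (0:ℝ) ≤ 3*x^2 + 2*x + 1)]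
  have F3 : (1 - A) ≤ (3/4) * A := by
    have hAA : A * Real.exp (1/2 : ℝ) = 1 := by
      rw [hA, ← Real.exp_add]; norm_num
    have he2 : Real.exp (1/2 : ℝ) ≤ 7/4 := by
      have hsq : Real.exp (1/2 : ℝ) * Real.exp (1/2 : ℝ) = Real.exp 1 := by
        rw [← Real.exp_add]; norm_num
      nlinarith [Real.exp_one_lt_d9, Real.exp_pos (1/2 : ℝ)]
    nlinarith [Real.exp_pos (1/2 : ℝ)]
  have F4 : 0 ≤ 1 - E4 := by
    rw [hE4]
    have : Real.exp (-q) ≤ 1 := by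
      rw [← Real.exp_zero]; exact Real.exp_le_exp.mpr (by linarith)
    linarith
  have F6 : (3/4) * A * (1 - E4) ≤ A * (1 - E3) := by nlinarith
  have F7 : 0 ≤ ((3/4) * A - (1 - A)) * (1 - E4) := mul_nonneg (by linarith) F4
  rw [hexp2]
  nlinarith



private lemma submod_marginal_sum {V : Type*} [DecidableEq V] (f : Finset V → ℝ)
    (f_submod : ∀ X Y : Finset V, f (X ∩ Y) + f (X ∪ Y) ≤ f X + f Y)
    (G : Finset V) :
    ∀ S : Finset V, f (G ∪ S) ≤ f G + ∑ a ∈ S \ G, (f (insert a G) - f G) := by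
  intro S
  induction S using Finset.induction_on with
  | empty => simp
  | @insert a S ha ih =>
    by_cases haG : a ∈ G
    · have h1 : G ∪ insert a S = G ∪ S := by
        ext x; simp only [Finset.mem_union, Finset.mem_insert]
        constructor
        · rintro (h | rfl | h) <;> tauto
        · tauto
      have h2 : insert a S \ G = S \ G := by
        ext x; simp only [Finset.mem_sdiff, Finset.mem_insert]
        constructor
        · rintro ⟨rfl | h, h2⟩ <;> tauto
        · tauto
      rw [h1, h2]; exact ih
    · have h1 : insert a S \ G = insert a (S \ G) := by
        ext x; simp only [Finset.mem_sdiff, Finset.mem_insert]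
        constructor
        · rintro ⟨rfl | h, h2⟩ <;> tauto
        · rintro (rfl | ⟨h, h2⟩) <;> tauto
      have h2 : a ∉ S \ G := fun h => ha (Finset.mem_sdiff.mp h).1
      rw [h1, Finset.sum_insert h2]
      have hsub := f_submod (G ∪ S) (insert a G)
      have hint : (G ∪ S) ∩ insert a G = G := by
        ext x; simp only [Finset.mem_inter, Finset.mem_union, Finset.mem_insert]
        constructor
        · rintro ⟨h | h, rfl | h2⟩ <;> first | assumption | (exfalso; tauto)
        · tauto
      have huni : (G ∪ S) ∪ insert a G = G ∪ insert a S := by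
        ext x; simp only [Finset.mem_union, Finset.mem_insert]; tauto
      rw [hint, huni] at hsub
      linarith

private lemma take_toFinset_succ {V : Type*} [DecidableEq V] (g : List V) (m : ℕ)
    (hm : m < g.length) :
    (g.take (m+1)).toFinset = insert (g.get ⟨m, hm⟩) (g.take m).toFinset := by
  have h : g.take (m+1) = g.take m ++ [g[m]] := by
    rw [List.take_succ, List.getElem?_eq_getElem hm]
    rfl
  ext x
  rw [List.mem_toFinset, h, List.mem_append]
  simp [List.get_eq_getElem, or_comm]

private lemma get_not_mem_take {V : Type*} [DecidableEq V] (g : List V) (hnodup : g.Nodup)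
    (m : ℕ) (hm : m < g.length) : g.get ⟨m, hm⟩ ∉ (g.take m).toFinset := by
  intro hmem
  have hnd : (g.take (m+1)).Nodup := (List.take_sublist _ _).nodup hnodup
  rw [List.take_succ, List.getElem?_eq_getElem hm] at hnd
  rw [List.nodup_append] at hnd
  exact hnd.2.2 _ (List.mem_toFinset.mp hmem) (g[m]) (by simp) (by simp [List.get_eq_getElem])

private lemma greedy_chain {V : Type*} [DecidableEq V] (f : Finset V → ℝ)
    (f_mono : ∀ X Y : Finset V, X ⊆ Y → f X ≤ f Y)
    (f_submod : ∀ X Y : Finset V, f (X ∩ Y) + f (X ∪ Y) ≤ f X + f Y)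
    (c : V → ℝ) (hc : ∀ v, 0 < c v) (b : ℝ)
    (g : List V) (hnodup : g.Nodup)
    (hgreedy : ∀ t : Fin g.length,
      (∑ v ∈ (g.take t).toFinset, c v) + c (g.get t) ≤ b ∧
      ∀ u : V, u ∉ (g.take t).toFinset →
        (∑ v ∈ (g.take t).toFinset, c v) + c u ≤ b →
        (f (insert u (g.take t).toFinset) - f (g.take t).toFinset) / c u ≤
          (f (insert (g.get t) (g.take t).toFinset) - f (g.take t).toFinset) /
            c (g.get t))
    (S : Finset V) (hS : S.Nonempty) :
    ∀ j, j ≤ g.length → ∀ i, i ≤ j →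
      (∀ k, i ≤ k → k < j → ∀ a ∈ S, a ∉ (g.take k).toFinset →
        (∑ v ∈ (g.take k).toFinset, c v) + c a ≤ b) →
      f S - f (g.take j).toFinset ≤
        Real.exp (-(((∑ v ∈ (g.take j).toFinset, c v) -
          ∑ v ∈ (g.take i).toFinset, c v) / ∑ v ∈ S, c v)) *
          max (f S - f (g.take i).toFinset) 0 := by
  have hcS : 0 < ∑ v ∈ S, c v := Finset.sum_pos (fun v _ => hc v) hS
  intro j
  induction j with
  | zero =>
    intro _ i hi _
    have : i = 0 := Nat.le_zero.mp hi
    subst this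
    simp only [sub_self, zero_div, neg_zero, Real.exp_zero, one_mul]
    exact le_max_left _ _
  | succ m ih =>
    intro hm1 i hi hfeas
    by_cases hi' : i = m + 1
    · subst hi'
      simp only [sub_self, zero_div, neg_zero, Real.exp_zero, one_mul]
      exact le_max_left _ _
    · have him : i ≤ m := by omega
      have hmlen : m < g.length := hm1
      have hIH := ih (Nat.le_of_lt hmlen) i him
        (fun k hk1 hk2 => hfeas k hk1 (by omega))
      set Gm := (g.take m).toFinset with hGm
      set w := g.get ⟨m, hmlen⟩ with hw
      have htake : (g.take (m+1)).toFinset = insert w Gm := take_toFinset_succ g m hmlen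
      have hwnot : w ∉ Gm := get_not_mem_take g hnodup m hmlen
      have hcost : ∑ v ∈ (g.take (m+1)).toFinset, c v = (∑ v ∈ Gm, c v) + c w := by
        rw [htake, Finset.sum_insert hwnot]; ring
      have hmonoGm : f Gm ≤ f (insert w Gm) :=
        f_mono _ _ (Finset.subset_insert _ _)
      rcases le_or_gt (f S - f Gm) 0 with hD | hD
      · have h1 : f S - f (g.take (m+1)).toFinset ≤ 0 := by
          rw [htake]; linarith
        have h2 : 0 ≤ Real.exp (-(((∑ v ∈ (g.take (m+1)).toFinset, c v) -
            ∑ v ∈ (g.take i).toFinset, c v) / ∑ v ∈ S, c v)) *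
            max (f S - f (g.take i).toFinset) 0 :=
          mul_nonneg (Real.exp_pos _).le (le_max_right _ _)
        linarith
      · obtain ⟨hbud, hcomp⟩ := hgreedy ⟨m, hmlen⟩
        set R : ℝ := (f (insert w Gm) - f Gm) / c w with hR
        have hR0 : 0 ≤ R := div_nonneg (by linarith) (hc w).le
        -- each feasible element of S \ Gm has gain ≤ c a * R
        have hterm : ∀ a ∈ S \ Gm, f (insert a Gm) - f Gm ≤ c a * R := by
          intro a haa
          obtain ⟨haS, haG⟩ := Finset.mem_sdiff.mp haa
          have hfa := hfeas m him (Nat.lt_succ_self m) a haS haG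
          have h5 : (f (insert a Gm) - f Gm) / c a ≤ R := hcomp a haG hfa
          calc f (insert a Gm) - f Gm
              = ((f (insert a Gm) - f Gm) / c a) * c a :=
                (div_mul_cancel₀ _ (hc a).ne').symm
            _ ≤ R * c a := mul_le_mul_of_nonneg_right h5 (hc a).le
            _ = c a * R := mul_comm _ _
        have hsum : f S - f Gm ≤ (∑ a ∈ S \ Gm, c a) * R := by
          have h1 : f S ≤ f (Gm ∪ S) := f_mono _ _ Finset.subset_union_right
          have h2 := submod_marginal_sum f f_submod Gm S
          have h3 : ∑ a ∈ S \ Gm, (f (insert a Gm) - f Gm) ≤ ∑ a ∈ S \ Gm, c a * R :=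
            Finset.sum_le_sum hterm
          rw [← Finset.sum_mul] at *
          calc f S - f Gm ≤ f (Gm ∪ S) - f Gm := by linarith
            _ ≤ ∑ a ∈ S \ Gm, (f (insert a Gm) - f Gm) := by linarith
            _ ≤ (∑ a ∈ S \ Gm, c a) * R := by rw [Finset.sum_mul] at h3 ⊢; exact h3
        have hsubcost : (∑ a ∈ S \ Gm, c a) ≤ ∑ v ∈ S, c v :=
          Finset.sum_le_sum_of_subset_of_nonneg (Finset.sdiff_subset)
            (fun a _ _ => (hc a).le)
        have hkey : f S - f Gm ≤ (∑ v ∈ S, c v) * R :=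
          le_trans hsum (mul_le_mul_of_nonneg_right hsubcost hR0)
        set z : ℝ := c w / ∑ v ∈ S, c v with hz
        have hz0 : 0 ≤ z := div_nonneg (hc w).le hcS.le
        have hgainR : f (insert w Gm) - f Gm = c w * R := by
          rw [hR, mul_comm]
          exact (div_mul_cancel₀ _ (hc w).ne').symm
        have hstep : f S - f (insert w Gm) ≤ (1 - z) * (f S - f Gm) := by
          have h4 : z * (f S - f Gm) ≤ c w * R := by
            rw [hz, div_mul_eq_mul_div, div_le_iff₀ hcS]
            calc c w * (f S - f Gm) ≤ c w * ((∑ v ∈ S, c v) * R) :=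
                  mul_le_mul_of_nonneg_left hkey (hc w).le
              _ = c w * R * (∑ v ∈ S, c v) := by ring
          have : f S - f (insert w Gm) = (f S - f Gm) - (c w * R) := by
            rw [← hgainR]; ring
          rw [this]; linarith
        have h1z : (1 - z) ≤ Real.exp (-z) := by
          have := Real.add_one_le_exp (-z); linarith
        have hIH' : f S - f Gm ≤ Real.exp (-(((∑ v ∈ Gm, c v) -
            ∑ v ∈ (g.take i).toFinset, c v) / ∑ v ∈ S, c v)) *
            max (f S - f (g.take i).toFinset) 0 := hIH
        calc f S - f (g.take (m+1)).toFinset = f S - f (insert w Gm) := by rw [htake]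
          _ ≤ (1 - z) * (f S - f Gm) := hstep
          _ ≤ Real.exp (-z) * (f S - f Gm) :=
              mul_le_mul_of_nonneg_right h1z hD.le
          _ ≤ Real.exp (-z) * (Real.exp (-(((∑ v ∈ Gm, c v) -
                ∑ v ∈ (g.take i).toFinset, c v) / ∑ v ∈ S, c v)) *
                max (f S - f (g.take i).toFinset) 0) :=
              mul_le_mul_of_nonneg_left hIH' (Real.exp_pos _).le
          _ = Real.exp (-(((∑ v ∈ (g.take (m+1)).toFinset, c v) -
                ∑ v ∈ (g.take i).toFinset, c v) / ∑ v ∈ S, c v)) *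
                max (f S - f (g.take i).toFinset) 0 := by
              rw [← mul_assoc, ← Real.exp_add, hcost]
              congr 2
              rw [hz]
              ring


set_option maxHeartbeats 1000000 in
/-- Budgeted greedy approximation guarantee: if `g = [v₁, …, v_T]` is a
maximal cost-benefit greedy sequence for a non-decreasing submodular function
`f` with `f ∅ = 0`, positive costs `c` and budget `b`, then the better of the
greedy solution and the best feasible singleton achieves at least a
`(1 − 1/√e)` fraction of the optimum, i.e. for every feasible set `A`,
`(1 − 1/√e) · f A ≤ max (f G_T) (max {f {v} : c v ≤ b})`. -/
theorem budgeted_greedy_guarantee {V : Type*} [Fintype V] [DecidableEq V]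
    (f : Finset V → ℝ)
    (f_mono : ∀ X Y : Finset V, X ⊆ Y → f X ≤ f Y)
    (f_submod : ∀ X Y : Finset V, f (X ∩ Y) + f (X ∪ Y) ≤ f X + f Y)
    (f_empty : f ∅ = 0)
    (c : V → ℝ) (hc : ∀ v, 0 < c v)
    (b : ℝ) (hb : 0 ≤ b)
    (g : List V) (hnodup : g.Nodup)
    (hgreedy : ∀ t : Fin g.length,
      (∑ v ∈ (g.take t).toFinset, c v) + c (g.get t) ≤ b ∧
      ∀ u : V, u ∉ (g.take t).toFinset →
        (∑ v ∈ (g.take t).toFinset, c v) + c u ≤ b →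
        (f (insert u (g.take t).toFinset) - f (g.take t).toFinset) / c u ≤
          (f (insert (g.get t) (g.take t).toFinset) - f (g.take t).toFinset) /
            c (g.get t))
    (hmaximal : ∀ u : V, u ∉ g.toFinset →
      b < (∑ v ∈ g.toFinset, c v) + c u) :
    ∀ A : Finset V, (∑ v ∈ A, c v) ≤ b →
      (1 - 1 / Real.sqrt (Real.exp 1)) * f A ≤ f g.toFinset ∨
      ∃ v : V, c v ≤ b ∧ (1 - 1 / Real.sqrt (Real.exp 1)) * f A ≤ f {v} := by
  classical
  intro A hA
  -- rewrite the constant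
  have hsqrt : Real.sqrt (Real.exp 1) = Real.exp (1/2 : ℝ) := by
    rw [show Real.exp 1 = Real.exp (1/2 : ℝ) * Real.exp (1/2 : ℝ) by
      rw [← Real.exp_add]; norm_num]
    exact Real.sqrt_mul_self (Real.exp_pos _).le
  have hα : 1 - 1 / Real.sqrt (Real.exp 1) = 1 - Real.exp (-(1/2 : ℝ)) := by
    rw [hsqrt, Real.exp_neg, one_div]
  rw [hα]
  set α : ℝ := 1 - Real.exp (-(1/2 : ℝ)) with hαd
  clear_value α
  have hE : Real.exp (-(1/2:ℝ)) * Real.exp (1/2:ℝ) = 1 := by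
    rw [← Real.exp_add]; norm_num
  have hE2 : Real.exp (1/2:ℝ) ≤ 7/4 := by
    have hsq : Real.exp (1/2:ℝ) * Real.exp (1/2:ℝ) = Real.exp 1 := by
      rw [← Real.exp_add]; norm_num
    nlinarith [Real.exp_one_lt_d9, Real.exp_pos (1/2:ℝ)]
  have hE1 : 1 ≤ Real.exp (1/2:ℝ) := Real.one_le_exp (by norm_num)
  have hexphalf : 0 < Real.exp (-(1/2:ℝ)) := Real.exp_pos _
  have hα0 : 0 ≤ α := by rw [hαd]; nlinarith
  have hαhalf : α ≤ 1/2 := by rw [hαd]; nlinarith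
  have hfA0 : 0 ≤ f A := by
    have h := f_mono ∅ A (Finset.empty_subset A); rw [f_empty] at h; exact h
  have hTfin : (g.take g.length).toFinset = g.toFinset := by rw [List.take_length]
  have hGsub : ∀ m n : ℕ, m ≤ n → (g.take m).toFinset ⊆ (g.take n).toFinset := by
    intro m n hmn x hx
    rw [List.mem_toFinset] at hx ⊢
    have h1 : g.take m = (g.take n).take m := by
      rw [List.take_take, min_eq_left hmn]
    rw [h1] at hx
    exact List.take_subset _ _ hx
  have hcmono : ∀ X Y : Finset V, X ⊆ Y → ∑ v ∈ X, c v ≤ ∑ v ∈ Y, c v := fun X Y h =>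
    Finset.sum_le_sum_of_subset_of_nonneg h (fun v _ _ => (hc v).le)
  -- the case where greedy swallows everything feasible
  by_cases hbadA : ∃ j, j ≤ g.length ∧ ∃ a ∈ A, a ∉ (g.take j).toFinset ∧
      b < (∑ v ∈ (g.take j).toFinset, c v) + c a
  case neg =>
    push_neg at hbadA
    left
    have hsubA : A ⊆ g.toFinset := by
      intro a haA
      by_contra hnot
      have h1 := hmaximal a hnot
      have h2 := hbadA g.length le_rfl a haA (by rw [hTfin]; exact hnot)
      rw [hTfin] at h2
      exact absurd h2 (not_le.mpr h1)
    have := f_mono A g.toFinset hsubA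
    nlinarith [mul_nonneg (by linarith : (0:ℝ) ≤ 1 - α) hfA0]
  case pos =>
  set T := g.length with hT
  set t := Nat.find hbadA with htd
  obtain ⟨htT, astar, hastarA, hastarG, hastarb⟩ := Nat.find_spec hbadA
  rw [← htd] at htT hastarG hastarb
  have hfeasA : ∀ k, 0 ≤ k → k < t → ∀ a ∈ A, a ∉ (g.take k).toFinset →
      (∑ v ∈ (g.take k).toFinset, c v) + c a ≤ b := by
    intro k _ hk a haA haG
    by_contra hcon
    exact Nat.find_min hbadA hk ⟨by omega, a, haA, haG, not_le.mp hcon⟩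
  have hCA : 0 < ∑ v ∈ A, c v := Finset.sum_pos (fun v _ => hc v) ⟨astar, hastarA⟩
  have hchain1 := greedy_chain f f_mono f_submod c hc b g hnodup hgreedy A
    ⟨astar, hastarA⟩ t htT 0 (Nat.zero_le t) hfeasA
  simp only [List.take_zero, List.toFinset_nil, Finset.sum_empty, sub_zero, f_empty] at hchain1
  rw [max_eq_left hfA0] at hchain1
  clear_value t
  set γ : ℝ := ∑ v ∈ (g.take t).toFinset, c v with hγd
  have hγ0 : 0 ≤ γ := Finset.sum_nonneg (fun v _ => (hc v).le)
  clear_value γ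
  have hGtT : f (g.take t).toFinset ≤ f g.toFinset := by
    rw [← hTfin]; exact f_mono _ _ (hGsub t T htT)
  rcases le_or_gt b (2*γ) with hhalf | hhalf
  · -- Case 1 : greedy already spent at least b/2 before any element of A was cut off
    left
    have hexple : Real.exp (-(γ / ∑ v ∈ A, c v)) ≤ Real.exp (-(1/2:ℝ)) := by
      apply Real.exp_le_exp.mpr
      have : (1/2:ℝ) ≤ γ / ∑ v ∈ A, c v := by
        rw [le_div_iff₀ hCA]; linarith
      linarith
    have h3 : f A - f (g.take t).toFinset ≤ Real.exp (-(1/2:ℝ)) * f A := by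
      calc f A - f (g.take t).toFinset ≤ Real.exp (-(γ / ∑ v ∈ A, c v)) * f A := hchain1
        _ ≤ Real.exp (-(1/2:ℝ)) * f A := mul_le_mul_of_nonneg_right hexple hfA0
    rw [hαd]; nlinarith
  · -- Case 2 : the cut-off element a* is expensive : c a* > b/2
    have hcastar : c astar ≤ b :=
      le_trans (Finset.single_le_sum (fun v _ => (hc v).le) hastarA) hA
    by_cases hM : α * f A ≤ f {astar}
    · exact Or.inr ⟨astar, hcastar, hM⟩
    push_neg at hM
    have hMsing0 : 0 ≤ f {astar} := by
      have h := f_mono ∅ {astar} (Finset.empty_subset _); rw [f_empty] at h; exact h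
    set A' : Finset V := A.erase astar with hA'd
    have hAA' : f A ≤ f A' + f {astar} := by
      have hsub := f_submod A' {astar}
      have hint : A' ∩ {astar} = ∅ := by
        ext x; simp only [Finset.mem_inter, Finset.mem_singleton, Finset.mem_erase,
          Finset.notMem_empty, iff_false, hA'd]
        rintro ⟨⟨hne, _⟩, rfl⟩; exact hne rfl
      have huni : A' ∪ {astar} = A := by
        ext x; simp only [Finset.mem_union, Finset.mem_singleton, Finset.mem_erase, hA'd]
        constructor
        · rintro (⟨_, h⟩ | rfl) <;> [exact h; exact hastarA]
        · intro hx; by_cases hxa : x = astar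
          · exact Or.inr hxa
          · exact Or.inl ⟨hxa, hx⟩
      rw [hint, huni, f_empty] at hsub
      linarith
    by_cases hbadA' : ∃ j, j ≤ T ∧ ∃ a ∈ A', a ∉ (g.take j).toFinset ∧
        b < (∑ v ∈ (g.take j).toFinset, c v) + c a
    case neg =>
      -- all of A' ends up inside the greedy set
      push_neg at hbadA'
      left
      have hsubA' : A' ⊆ g.toFinset := by
        intro a haA'
        by_contra hnot
        have h1 := hmaximal a hnot
        have h2 := hbadA' T le_rfl a haA' (by rw [hTfin]; exact hnot)
        rw [hTfin] at h2
        exact absurd h2 (not_le.mpr h1)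
      by_cases hastarG' : astar ∈ g.toFinset
      · have hsubA : A ⊆ g.toFinset := by
          intro x hx
          by_cases hxa : x = astar
          · rw [hxa]; exact hastarG'
          · exact hsubA' (Finset.mem_erase.mpr ⟨hxa, hx⟩)
        have := f_mono A g.toFinset hsubA
        nlinarith [mul_nonneg (by linarith : (0:ℝ) ≤ 1 - α) hfA0]
      · have hsubAins : A ⊆ insert astar g.toFinset := by
          intro x hx
          by_cases hxa : x = astar
          · rw [hxa]; exact Finset.mem_insert_self _ _
          · exact Finset.mem_insert_of_mem (hsubA' (Finset.mem_erase.mpr ⟨hxa, hx⟩))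
        have h4 : f A ≤ f (insert astar g.toFinset) := f_mono _ _ hsubAins
        have hsub := f_submod g.toFinset {astar}
        have hint : g.toFinset ∩ {astar} = ∅ := by
          ext x; simp only [Finset.mem_inter, Finset.mem_singleton, Finset.notMem_empty,
            iff_false]
          rintro ⟨hx, rfl⟩; exact hastarG' hx
        have huni : g.toFinset ∪ {astar} = insert astar g.toFinset := by
          ext x; simp [or_comm]
        rw [hint, huni, f_empty] at hsub
        -- f A ≤ f G_T + f {astar} < f G_T + α f A
        nlinarith
    case pos =>
    set t₂ := Nat.find hbadA' with ht₂d
    obtain ⟨ht₂T, ap, hapA', hapG, hapb⟩ := Nat.find_spec hbadA'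
    rw [← ht₂d] at ht₂T hapG hapb
    have htt₂ : t ≤ t₂ := by
      rw [htd]
      exact Nat.find_min' hbadA ⟨ht₂T, ap, Finset.mem_of_mem_erase hapA', hapG, hapb⟩
    have hfeasA' : ∀ k, t ≤ k → k < t₂ → ∀ a ∈ A', a ∉ (g.take k).toFinset →
        (∑ v ∈ (g.take k).toFinset, c v) + c a ≤ b := by
      intro k _ hk a haA' haG
      by_contra hcon
      exact Nat.find_min hbadA' hk ⟨by omega, a, haA', haG, not_le.mp hcon⟩
    clear_value t₂
    have hA'ne : A'.Nonempty := ⟨ap, hapA'⟩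
    have hchain2 := greedy_chain f f_mono f_submod c hc b g hnodup hgreedy A'
      hA'ne t₂ ht₂T t htt₂ hfeasA'
    rw [← hγd] at hchain2
    set C' : ℝ := ∑ v ∈ A', c v with hC'd
    set Γ : ℝ := ∑ v ∈ (g.take t₂).toFinset, c v with hΓd
    have hC' : 0 < C' := Finset.sum_pos (fun v _ => hc v) hA'ne
    have hCC : C' + c astar = ∑ v ∈ A, c v := Finset.sum_erase_add A c hastarA
    have hca' : c ap ≤ C' := Finset.single_le_sum (fun v _ => (hc v).le) hapA'
    have hγΓ : γ ≤ Γ := by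
      rw [hγd, hΓd]; exact hcmono _ _ (hGsub t t₂ htt₂)
    clear_value C' Γ
    have hC'γ : C' < γ := by linarith
    have hγpos : 0 < γ := lt_trans hC' hC'γ
    have hb0 : 0 < b := by linarith
    set E1 : ℝ := Real.exp (-(γ / ∑ v ∈ A, c v)) with hE1d
    set E2 : ℝ := Real.exp (-((Γ - γ) / C')) with hE2d
    have hE1pos : 0 < E1 := Real.exp_pos _
    have hE2pos : 0 < E2 := Real.exp_pos _
    clear_value E1 E2
    have hE2le1 : E2 ≤ 1 := by
      rw [hE2d, ← Real.exp_zero]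
      apply Real.exp_le_exp.mpr
      rw [neg_nonpos]
      exact div_nonneg (by linarith) hC'.le
    clear hfeasA hfeasA' htd ht₂d
    clear hbadA hbadA'
    -- the key numeric inequality
    have hkey : E2 * (E1 - α) ≤ 1 - 2*α := by
      rcases le_or_gt E1 α with hE1α | hE1α
      · linarith [mul_nonneg hE2pos.le (sub_nonneg.mpr hE1α)]
      · set p : ℝ := γ / b with hpd
        have hp0 : 0 < p := div_pos hγpos hb0
        clear_value p
        have hp : p ≤ 1/2 := by rw [hpd, div_le_iff₀ hb0]; linarith
        have h1p : 1/p = b/γ := by rw [hpd, one_div_div]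
        have hE1le : E1 ≤ Real.exp (-p) := by
          rw [hE1d]
          apply Real.exp_le_exp.mpr
          rw [neg_le_neg_iff, hpd]
          exact div_le_div_of_nonneg_left hγ0 hCA hA
        have hE2le : E2 ≤ Real.exp (2 - 1/p) := by
          rw [hE2d]
          apply Real.exp_le_exp.mpr
          rw [h1p]
          have h5 : b - γ - C' ≤ Γ - γ := by linarith
          have h6 : (b - γ - C') / C' ≤ (Γ - γ) / C' :=
            (div_le_div_iff_of_pos_right hC').mpr h5
          have h7 : (b - γ) / γ ≤ (b - γ) / C' :=
            div_le_div_of_nonneg_left (by linarith) hC' hC'γ.le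
          have h8 : (b - γ - C') / C' = (b - γ) / C' - 1 := by
            field_simp
          have h9 : b/γ - 2 ≤ (Γ - γ)/C' := by
            have h10 : (b - γ)/γ = b/γ - 1 := by field_simp
            linarith
          linarith
        calc E2 * (E1 - α) ≤ Real.exp (2 - 1/p) * (Real.exp (-p) - α) := by
              apply mul_le_mul hE2le (by linarith) (by linarith) (Real.exp_pos _).le
          _ ≤ 1 - 2*α := by rw [hαd]; exact key_ineq_s17 hp0 hp
    -- put everything together
    left
    rcases le_or_gt (f A' - f (g.take t).toFinset) 0 with hmax | hmax
    · rw [max_eq_right hmax, mul_zero] at hchain2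
      have h5 : f A' ≤ f (g.take t₂).toFinset := by linarith
      have h6 : f (g.take t₂).toFinset ≤ f g.toFinset := by
        rw [← hTfin]; exact f_mono _ _ (hGsub t₂ T ht₂T)
      nlinarith
    · rw [max_eq_left hmax.le] at hchain2
      have h6 : f (g.take t₂).toFinset ≤ f g.toFinset := by
        rw [← hTfin]; exact f_mono _ _ (hGsub t₂ T ht₂T)
      -- linear combination
      have hkeyfA : 0 ≤ (1 - 2*α - E2*E1 + E2*α) * f A := by
        apply mul_nonneg _ hfA0
        nlinarith
      nlinarith [mul_le_mul_of_nonneg_left hchain1 hE2pos.le,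
        mul_le_mul_of_nonneg_left hAA' (by linarith : (0:ℝ) ≤ 1 - E2),
        mul_le_mul_of_nonneg_left hM.le (by linarith : (0:ℝ) ≤ 1 - E2)]
end
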